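/- arXiv:1903.05234 — 6 statements merged into one kernel-verified Lean document; each statement's English description precedes it below -/
import Mathlib

section
/- For the simple symmetric random walk Z on the integers started at 0, and integers a, b > 0, let T be the first hitting time of {-a, b}. Then for every s in (0,1), the generating function satisfies E[s^T] = (e^{d_s a} + e^{d_s b}) / (1 + e^{d_s (a+b)}), where d_s = log((1 + sqrt(1 - s^2))/s). -/
open MeasureTheory ProbabilityTheory Topology

lemma cosh_eq {s : ℝ} (h0 : 0 < s) (h1 : s < 1) :
    Real.exp (Real.log ((1 + Real.sqrt (1 - s^2)) / s)) +
      Real.exp (-Real.log ((1 + Real.sqrt (1 - s^2)) / s)) = 2 / s := by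
  set u := Real.sqrt (1 - s ^ 2) with hu
  have hu2 : u ^ 2 = 1 - s ^ 2 := Real.sq_sqrt (by nlinarith)
  have hu0 : 0 ≤ u := Real.sqrt_nonneg _
  have hpos : 0 < (1 + u) / s := by positivity
  rw [Real.exp_log hpos, Real.exp_neg, Real.exp_log hpos]
  rw [inv_div]
  field_simp
  nlinarith

lemma nat_sInf_eq {A : Set ℕ} {m : ℕ} (hm : m ∈ A) (hlb : ∀ j ∈ A, m ≤ j) :
    sInf A = m :=
  le_antisymm (Nat.sInf_le hm) (hlb _ (Nat.sInf_mem ⟨m, hm⟩))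

lemma meas_pi_set {S : Finset ℕ} (A : Set (∀ _ : S, ℤ)) : MeasurableSet A :=
  (Set.to_countable A).measurableSet

lemma indep_helper {Ω : Type*} [MeasurableSpace Ω] (μ : Measure Ω) [IsProbabilityMeasure μ]
    (ξ : ℕ → Ω → ℤ) (hmeas : ∀ i, Measurable (ξ i))
    (hindep : iIndepFun ξ μ)
    (S T : Finset ℕ) (hST : Disjoint S T)
    (p : (∀ _ : S, ℤ) → Prop) (q : (∀ _ : T, ℤ) → Prop) :
    μ ({ω | p (fun i => ξ i ω)} ∩ {ω | q (fun i => ξ i ω)})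
      = μ {ω | p (fun i => ξ i ω)} * μ {ω | q (fun i => ξ i ω)} := by
  have h := (hindep.indepFun_finset S T hST hmeas).measure_inter_preimage_eq_mul
    {v | p v} {v | q v} (meas_pi_set _) (meas_pi_set _)
  exact h

lemma prob_all_ones {Ω : Type*} [MeasurableSpace Ω] (μ : Measure Ω) [IsProbabilityMeasure μ]
    (ξ : ℕ → Ω → ℤ) (hmeas : ∀ i, Measurable (ξ i))
    (hindep : iIndepFun ξ μ)
    (hdist : ∀ i, μ {ω | ξ i ω = 1} = 1/2 ∧ μ {ω | ξ i ω = -1} = 1/2)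
    (F : Finset ℕ) :
    μ {ω | ∀ j ∈ F, ξ j ω = 1} = (1/2 : ENNReal) ^ F.card := by
  classical
  induction F using Finset.cons_induction with
  | empty => simp
  | cons i F hi ih =>
    have hsplit : {ω | ∀ j ∈ Finset.cons i F hi, ξ j ω = 1}
        = {ω | (fun v : (∀ _ : F, ℤ) => ∀ j : F, v j = 1) (fun j => ξ j ω)}
          ∩ {ω | (fun v : (∀ _ : ({i} : Finset ℕ), ℤ) =>
              v ⟨i, Finset.mem_singleton_self i⟩ = 1) (fun j => ξ j ω)} := by
      ext ω
      simp [Finset.forall_mem_cons, Subtype.forall, and_comm]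
    have key := indep_helper μ ξ hmeas hindep F {i} (by simpa using hi)
      (fun v : (∀ _ : F, ℤ) => ∀ j : F, v j = 1)
      (fun v : (∀ _ : ({i} : Finset ℕ), ℤ) => v ⟨i, Finset.mem_singleton_self i⟩ = 1)
    rw [hsplit, key]
    have h1 : {ω | (fun v : (∀ _ : F, ℤ) => ∀ j : F, v j = 1) (fun j => ξ j ω)}
        = {ω | ∀ j ∈ F, ξ j ω = 1} := by ext ω; simp [Subtype.forall]
    have h2 : {ω | (fun v : (∀ _ : ({i} : Finset ℕ), ℤ) =>
        v ⟨i, Finset.mem_singleton_self i⟩ = 1) (fun j => ξ j ω)} = {ω | ξ i ω = 1} := rfl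
    rw [h1, h2, ih, (hdist i).1, Finset.card_cons, pow_succ]

lemma prob_blocks {Ω : Type*} [MeasurableSpace Ω] (μ : Measure Ω) [IsProbabilityMeasure μ]
    (ξ : ℕ → Ω → ℤ) (hmeas : ∀ i, Measurable (ξ i))
    (hindep : iIndepFun ξ μ)
    (hdist : ∀ i, μ {ω | ξ i ω = 1} = 1/2 ∧ μ {ω | ξ i ω = -1} = 1/2)
    (L : ℕ) (K : ℕ) :
    μ (⋂ k ∈ Finset.range K, {ω | ∀ j ∈ Finset.Ico (k*L) (k*L+L), ξ j ω = 1}ᶜ)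
      = (1 - (1/2 : ENNReal)^L)^K := by
  classical
  induction K with
  | zero => simp
  | succ K ih =>
    have hmB : ∀ k, MeasurableSet {ω : Ω | ∀ j ∈ Finset.Ico (k*L) (k*L+L), ξ j ω = 1} := by
      intro k
      have : {ω : Ω | ∀ j ∈ Finset.Ico (k*L) (k*L+L), ξ j ω = 1}
          = ⋂ j ∈ (Finset.Ico (k*L) (k*L+L) : Finset ℕ), (ξ j)⁻¹' {1} := by
        ext ω; simp
      rw [this]
      exact MeasurableSet.biInter (Finset.countable_toSet _)
        (fun j _ => hmeas j (measurableSet_singleton 1))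
    have hμB : ∀ k, μ {ω : Ω | ∀ j ∈ Finset.Ico (k*L) (k*L+L), ξ j ω = 1}
        = (1/2 : ENNReal)^L := by
      intro k
      rw [prob_all_ones μ ξ hmeas hindep hdist]
      congr 1
      simp [Nat.card_Ico]
    rw [Finset.range_add_one, Finset.set_biInter_insert]
    have key := indep_helper μ ξ hmeas hindep (Finset.Ico (K*L) (K*L+L)) (Finset.range (K*L))
      (by
        rw [Finset.disjoint_left]
        intro j hj hj'
        rw [Finset.mem_Ico] at hj
        rw [Finset.mem_range] at hj'
        omega)
      (fun v : (∀ _ : (Finset.Ico (K*L) (K*L+L) : Finset ℕ), ℤ) => ¬ ∀ j, v j = 1)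
      (fun v : (∀ _ : (Finset.range (K*L) : Finset ℕ), ℤ) =>
        ∀ k < K, ¬ ∀ j ∈ Finset.Ico (k*L) (k*L+L), ∀ (h : j ∈ Finset.range (K*L)), v ⟨j, h⟩ = 1)
    have h1 : {ω : Ω | ¬ ∀ j : (Finset.Ico (K*L) (K*L+L) : Finset ℕ), ξ j ω = 1}
        = {ω : Ω | ∀ j ∈ Finset.Ico (K*L) (K*L+L), ξ j ω = 1}ᶜ := by
      ext ω; simp [Subtype.forall]
    have h2 : {ω : Ω | ∀ k < K, ¬ ∀ j ∈ Finset.Ico (k*L) (k*L+L),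
          ∀ (h : j ∈ Finset.range (K*L)), ξ j ω = 1}
        = ⋂ k ∈ Finset.range K, {ω : Ω | ∀ j ∈ Finset.Ico (k*L) (k*L+L), ξ j ω = 1}ᶜ := by
      ext ω
      simp only [Set.mem_setOf_eq, Set.mem_iInter, Set.mem_compl_iff, Finset.mem_range]
      refine forall_congr' fun k => ?_
      refine imp_congr_right fun hk => not_congr ?_
      refine forall_congr' fun j => forall_congr' fun hj => ?_
      have hjr : j ∈ Finset.range (K*L) := by
        rw [Finset.mem_range]
        rw [Finset.mem_Ico] at hj
        have h1 : K*L ≥ k*L+L := by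
          calc k*L+L = (k+1)*L := by ring
          _ ≤ K*L := Nat.mul_le_mul_right L hk
        omega
      exact ⟨fun h => h (Finset.mem_range.mp hjr), fun h _ => h⟩
    rw [h1, h2] at key
    rw [key, ih, measure_compl (hmB K) (measure_ne_top _ _), hμB, measure_univ]
    ring

open Filter

theorem hitting_time_generating_function {Ω : Type*} [MeasurableSpace Ω]
    (μ : Measure Ω) [IsProbabilityMeasure μ]
    (ξ : ℕ → Ω → ℤ) (hmeas : ∀ i, Measurable (ξ i))
    (hindep : iIndepFun ξ μ)
    (hdist : ∀ i, μ {ω | ξ i ω = 1} = 1/2 ∧ μ {ω | ξ i ω = -1} = 1/2)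
    (a b : ℕ) (ha : 0 < a) (hb : 0 < b)
    (s : ℝ) (hs : s ∈ Set.Ioo (0:ℝ) 1)
    (Z : ℕ → Ω → ℤ) (hZ : ∀ n ω, Z n ω = ∑ k ∈ Finset.range n, ξ k ω)
    (T : Ω → ℕ) (hT : ∀ ω, T ω = sInf {n | Z n ω = -(a:ℤ) ∨ Z n ω = (b:ℤ)})
    (d : ℝ) (hd : d = Real.log ((1 + Real.sqrt (1 - s^2)) / s)) :
    ∫ ω, s ^ (T ω) ∂μ
      = (Real.exp (d * a) + Real.exp (d * b)) / (1 + Real.exp (d * (a + b))) := by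
  classical
  obtain ⟨hs0, hs1⟩ := hs
  have hd0 : 0 ≤ d := by
    rw [hd]
    apply Real.log_nonneg
    rw [le_div_iff₀ hs0]
    have := Real.sqrt_nonneg (1 - s^2)
    linarith
  have hcosh : s * (Real.exp d + Real.exp (-d)) = 2 := by
    rw [hd, cosh_eq hs0 hs1]
    field_simp
  set g : ℤ → ℝ := fun x =>
    (Real.exp (d*((x:ℝ)+(a:ℝ))) + Real.exp (d*((b:ℝ)-(x:ℝ)))) /
      (1 + Real.exp (d*((a:ℝ)+(b:ℝ)))) with hgdef
  have hDpos : 0 < 1 + Real.exp (d*((a:ℝ)+(b:ℝ))) := by positivity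
  have hgpos : ∀ x : ℤ, 0 < g x := by
    intro x; rw [hgdef]; positivity
  have hg2 : ∀ x : ℤ, -(a:ℤ) ≤ x → x ≤ (b:ℤ) → g x ≤ 2 := by
    intro x h1 h2
    have h1' : -(a:ℝ) ≤ (x:ℝ) := by exact_mod_cast h1
    have h2' : (x:ℝ) ≤ (b:ℝ) := by exact_mod_cast h2
    rw [hgdef]
    rw [div_le_iff₀ hDpos]
    have e1 : Real.exp (d*((x:ℝ)+(a:ℝ))) ≤ Real.exp (d*((a:ℝ)+(b:ℝ))) :=
      Real.exp_le_exp.mpr (mul_le_mul_of_nonneg_left (by linarith) hd0)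
    have e2 : Real.exp (d*((b:ℝ)-(x:ℝ))) ≤ Real.exp (d*((a:ℝ)+(b:ℝ))) :=
      Real.exp_le_exp.mpr (mul_le_mul_of_nonneg_left (by linarith) hd0)
    nlinarith [Real.exp_pos (d*((a:ℝ)+(b:ℝ)))]
  have hgb : ∀ x : ℤ, (x = -(a:ℤ) ∨ x = (b:ℤ)) → g x = 1 := by
    intro x hx
    rw [hgdef, div_eq_one_iff_eq (ne_of_gt hDpos)]
    rcases hx with h | h <;> subst h <;> push_cast
    · rw [show d*(-(a:ℝ)+(a:ℝ)) = 0 by ring,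
        show d*((b:ℝ)-(-(a:ℝ))) = d*((a:ℝ)+(b:ℝ)) by ring, Real.exp_zero]
    · rw [show d*((b:ℝ)+(a:ℝ)) = d*((a:ℝ)+(b:ℝ)) by ring,
        show d*((b:ℝ)-(b:ℝ)) = 0 by ring, Real.exp_zero]
      ring
  have hharm : ∀ x : ℤ, s * (g (x+1) + g (x-1)) = 2 * g x := by
    intro x
    rw [hgdef]
    simp only
    rw [show d*(((x+1:ℤ):ℝ)+(a:ℝ)) = d*((x:ℝ)+(a:ℝ))+d by push_cast; ring,
      show d*((b:ℝ)-((x+1:ℤ):ℝ)) = d*((b:ℝ)-(x:ℝ))+(-d) by push_cast; ring,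
      show d*(((x-1:ℤ):ℝ)+(a:ℝ)) = d*((x:ℝ)+(a:ℝ))+(-d) by push_cast; ring,
      show d*((b:ℝ)-((x-1:ℤ):ℝ)) = d*((b:ℝ)-(x:ℝ))+d by push_cast; ring,
      Real.exp_add, Real.exp_add, Real.exp_add, Real.exp_add]
    rw [← add_div, ← mul_div_assoc, ← mul_div_assoc]
    congr 1
    nlinarith [hcosh, Real.exp_pos (d*((x:ℝ)+(a:ℝ))), Real.exp_pos (d*((b:ℝ)-(x:ℝ)))]

  -- measurability and basic setup
  have hZmeas : ∀ n, Measurable (Z n) := by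
    intro n
    have h : Z n = fun ω => ∑ k ∈ Finset.range n, ξ k ω := by funext ω; exact hZ n ω
    rw [h]
    exact Finset.measurable_sum _ (fun k _ => hmeas k)
  set S : Ω → Set ℕ := fun ω => {n | Z n ω = -(a:ℤ) ∨ Z n ω = (b:ℤ)} with hSdef
  have hSmes : ∀ n, MeasurableSet {ω | n ∈ S ω} := by
    intro n
    have h : {ω | n ∈ S ω} = {ω | Z n ω = -(a:ℤ)} ∪ {ω | Z n ω = (b:ℤ)} := by
      ext ω; simp [hSdef]
    rw [h]
    exact (hZmeas n (measurableSet_singleton _)).union (hZmeas n (measurableSet_singleton _))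
  set τ : ℕ → Ω → ℕ := fun n ω => sInf (S ω ∪ {n}) with hτdef
  have hτ_le : ∀ n ω, τ n ω ≤ n := fun n ω => Nat.sInf_le (by simp)
  have hτ_mem : ∀ n ω, τ n ω ∈ S ω ∪ {n} := fun n ω => Nat.sInf_mem ⟨n, by simp⟩
  have hτ_hit : ∀ n ω k, k ≤ n → k ∈ S ω → τ n ω = sInf (S ω) ∧ sInf (S ω) ∈ S ω := by
    intro n ω k hk hkS
    have hne : (S ω).Nonempty := ⟨k, hkS⟩
    have hmemS := Nat.sInf_mem hne
    refine ⟨le_antisymm (Nat.sInf_le (Or.inl hmemS)) ?_, hmemS⟩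
    rcases hτ_mem n ω with h | h
    · exact Nat.sInf_le h
    · have h1 : sInf (S ω) ≤ k := Nat.sInf_le hkS
      simp only [Set.mem_singleton_iff] at h
      omega
  have hτ_nohit : ∀ n ω, (∀ k, k ≤ n → k ∉ S ω) → τ n ω = n := by
    intro n ω hA
    rcases hτ_mem n ω with h | h
    · exact absurd h (hA _ (hτ_le n ω))
    · simpa using h
  -- a.e. the steps are ±1
  have hG : ∀ᵐ ω ∂μ, ∀ i, ξ i ω = 1 ∨ ξ i ω = -1 := by
    rw [ae_all_iff]
    intro i
    have hm1 : MeasurableSet {ω | ξ i ω = (1:ℤ)} := hmeas i (measurableSet_singleton _)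
    have hm2 : MeasurableSet {ω | ξ i ω = (-1:ℤ)} := hmeas i (measurableSet_singleton _)
    have hu : μ ({ω | ξ i ω = (1:ℤ)} ∪ {ω | ξ i ω = (-1:ℤ)}) = 1 := by
      rw [measure_union ?_ hm2, (hdist i).1, (hdist i).2]
      · rw [ENNReal.div_add_div_same]
        norm_num
        exact ENNReal.div_self two_ne_zero ENNReal.ofNat_ne_top
      · rw [Set.disjoint_left]
        rintro ω h1 h2
        simp only [Set.mem_setOf_eq] at h1 h2
        omega
    rw [ae_iff]
    have hc : {ω | ¬(ξ i ω = 1 ∨ ξ i ω = -1)}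
        = ({ω | ξ i ω = (1:ℤ)} ∪ {ω | ξ i ω = (-1:ℤ)})ᶜ := by
      ext ω; simp [not_or]
    rw [hc, measure_compl (hm1.union hm2) (measure_ne_top μ _), hu, measure_univ, tsub_self]
  -- discrete intermediate value bound
  have hIVT : ∀ ω, (∀ i, ξ i ω = 1 ∨ ξ i ω = -1) → ∀ n, (∀ k, k ≤ n → k ∉ S ω) →
      -(a:ℤ) < Z n ω ∧ Z n ω < (b:ℤ) := by
    intro ω hω n
    induction n with
    | zero =>
      intro _
      have h0 : Z 0 ω = 0 := by rw [hZ]; simp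
      rw [h0]
      omega
    | succ n ih =>
      intro hA
      have h1 := ih (fun k hk => hA k (Nat.le_succ_of_le hk))
      have h2 : Z (n+1) ω = Z n ω + ξ n ω := by rw [hZ, hZ, Finset.sum_range_succ]
      have h3 := hA (n+1) le_rfl
      simp only [hSdef, Set.mem_setOf_eq] at h3
      rcases hω n with h5 | h5 <;> omega

  set Φ : ℕ → Ω → ℝ := fun n ω => s ^ (τ n ω) * g (Z (τ n ω) ω) with hΦdef
  have hmemU : ∀ (i n : ℕ), MeasurableSet {ω | i ∈ S ω ∪ {n}} := by
    intro i n
    have h : {ω | i ∈ S ω ∪ {n}} = {ω | i ∈ S ω} ∪ {ω : Ω | i ∈ ({n} : Set ℕ)} := by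
      rfl
    rw [h]
    exact (hSmes i).union (MeasurableSet.const _)
  have hτset : ∀ n j, MeasurableSet {ω | τ n ω = j} := by
    intro n j
    have h : {ω | τ n ω = j}
        = {ω | j ∈ S ω ∪ {n}} ∩ ⋂ i ∈ Finset.range j, {ω | i ∈ S ω ∪ {n}}ᶜ := by
      ext ω
      simp only [Set.mem_setOf_eq, Set.mem_inter_iff, Set.mem_iInter, Set.mem_compl_iff,
        Finset.mem_range]
      constructor
      · intro hτj
        refine ⟨hτj ▸ hτ_mem n ω, fun i hi hiS => ?_⟩
        have hle : τ n ω ≤ i := Nat.sInf_le hiS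
        omega
      · rintro ⟨hj, hlt⟩
        exact nat_sInf_eq hj (fun i hiS => by by_contra hc; push_neg at hc; exact hlt i hc hiS)
    rw [h]
    exact (hmemU j n).inter
      (MeasurableSet.biInter (Finset.countable_toSet _) fun i _ => (hmemU i n).compl)
  have hΦrep : ∀ n ω, Φ n ω
      = ∑ j ∈ Finset.range (n+1), if τ n ω = j then s ^ j * g (Z j ω) else 0 := by
    intro n ω
    rw [Finset.sum_eq_single (τ n ω)]
    · rw [if_pos rfl]
    · intro j _ hj; rw [if_neg (fun h => hj h.symm)]
    · intro hmemn
      exact absurd (Finset.mem_range.mpr (Nat.lt_succ_of_le (hτ_le n ω))) hmemn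
  have hΦmeas : ∀ n, Measurable (Φ n) := by
    intro n
    have h : Φ n = fun ω => ∑ j ∈ Finset.range (n+1),
        if τ n ω = j then s ^ j * g (Z j ω) else 0 := funext (hΦrep n)
    rw [h]
    apply Finset.measurable_sum
    intro j _
    exact Measurable.ite (hτset n j)
      (((measurable_of_countable g).comp (hZmeas j)).const_mul (s^j)) measurable_const
  have hbd : ∀ ω, (∀ i, ξ i ω = 1 ∨ ξ i ω = -1) → ∀ n, ‖Φ n ω‖ ≤ 2 := by
    intro ω hω n
    have hg0 : 0 < g (Z (τ n ω) ω) := hgpos _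
    have hsp : 0 < s ^ (τ n ω) := pow_pos hs0 _
    have hs1' : s ^ (τ n ω) ≤ 1 := pow_le_one₀ (le_of_lt hs0) (le_of_lt hs1)
    have hgle : g (Z (τ n ω) ω) ≤ 2 := by
      by_cases hA : ∀ k, k ≤ n → k ∉ S ω
      · have hn := hτ_nohit n ω hA
        obtain ⟨h1, h2⟩ := hIVT ω hω n hA
        rw [hn]
        exact hg2 _ (by omega) (by omega)
      · push_neg at hA
        obtain ⟨k, hk, hkS⟩ := hA
        obtain ⟨heq, hmemS⟩ := hτ_hit n ω k hk hkS
        have hmem : τ n ω ∈ S ω := heq ▸ hmemS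
        simp only [hSdef, Set.mem_setOf_eq] at hmem
        rw [hgb _ hmem]
        norm_num
    have hΦval : Φ n ω = s ^ (τ n ω) * g (Z (τ n ω) ω) := rfl
    rw [hΦval, Real.norm_eq_abs, abs_of_pos (mul_pos hsp hg0)]
    calc s ^ (τ n ω) * g (Z (τ n ω) ω) ≤ 1 * 2 :=
      mul_le_mul hs1' hgle (le_of_lt hg0) zero_le_one
    _ = 2 := one_mul 2
  have hΦint : ∀ n, Integrable (Φ n) μ := by
    intro n
    refine Integrable.mono' (integrable_const 2) ((hΦmeas n).aestronglyMeasurable) ?_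
    filter_upwards [hG] with ω hω
    exact hbd ω hω n

  have hhit : ∀ᵐ ω ∂μ, (S ω).Nonempty := by
    set L := a + b with hLdef
    have hkey : ∀ ω, (∀ i, ξ i ω = 1 ∨ ξ i ω = -1) → ∀ k : ℕ,
        (∀ j ∈ Finset.Ico (k*L) (k*L+L), ξ j ω = 1) → (S ω).Nonempty := by
      intro ω hω k hall
      by_contra hne
      have hno : ∀ m, m ∉ S ω := fun m hm => hne ⟨m, hm⟩
      have hbdd : ∀ m, -(a:ℤ) < Z m ω ∧ Z m ω < b :=
        fun m => hIVT ω hω m (fun j _ => hno j)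
      have hinc : ∀ i, i ≤ L → Z (k*L+i) ω = Z (k*L) ω + i := by
        intro i hi
        induction i with
        | zero => simp
        | succ i ih =>
          have hii := ih (by omega)
          have hξ : ξ (k*L+i) ω = 1 := hall _ (by rw [Finset.mem_Ico]; omega)
          have hZs : Z (k*L+i+1) ω = Z (k*L+i) ω + ξ (k*L+i) ω := by
            rw [hZ, hZ, Finset.sum_range_succ]
          have harr : (k*L+(i+1)) = (k*L+i+1) := by omega
          rw [harr, hZs, hii, hξ]
          push_cast; ring
      have h1 := (hbdd (k*L)).1
      have h2 := (hbdd (k*L+L)).2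
      rw [hinc L le_rfl] at h2
      omega
    have hsub : ∀ K : ℕ, {ω | ¬ (S ω).Nonempty} ∩ {ω | ∀ i, ξ i ω = 1 ∨ ξ i ω = -1}
        ⊆ ⋂ k ∈ Finset.range K, {ω | ∀ j ∈ Finset.Ico (k*L) (k*L+L), ξ j ω = 1}ᶜ := by
      intro K ω hω
      simp only [Set.mem_inter_iff, Set.mem_setOf_eq] at hω
      obtain ⟨h1, h2⟩ := hω
      simp only [Set.mem_iInter, Set.mem_compl_iff, Set.mem_setOf_eq]
      intro k _ hc
      exact h1 (hkey ω h2 k hc)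
    have hGc : μ {ω | ¬∀ i, ξ i ω = 1 ∨ ξ i ω = -1} = 0 := ae_iff.mp hG
    have hKbound : ∀ K : ℕ, μ {ω | ¬ (S ω).Nonempty} ≤ (1 - (1/2:ENNReal)^L)^K := by
      intro K
      calc μ {ω | ¬ (S ω).Nonempty}
          ≤ μ (({ω | ¬ (S ω).Nonempty} ∩ {ω | ∀ i, ξ i ω = 1 ∨ ξ i ω = -1})
              ∪ {ω | ¬∀ i, ξ i ω = 1 ∨ ξ i ω = -1}) := by
            apply measure_mono
            intro ω h
            by_cases hg : ∀ i, ξ i ω = 1 ∨ ξ i ω = -1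
            · exact Or.inl ⟨h, hg⟩
            · exact Or.inr hg
        _ ≤ μ ({ω | ¬ (S ω).Nonempty} ∩ {ω | ∀ i, ξ i ω = 1 ∨ ξ i ω = -1})
              + μ {ω | ¬∀ i, ξ i ω = 1 ∨ ξ i ω = -1} := measure_union_le _ _
        _ ≤ (1 - (1/2:ENNReal)^L)^K + 0 := by
            apply add_le_add
            · exact le_trans (measure_mono (hsub K))
                (le_of_eq (prob_blocks μ ξ hmeas hindep hdist L K))
            · exact le_of_eq hGc
        _ = (1 - (1/2:ENNReal)^L)^K := add_zero _
    rw [ae_iff]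
    refine le_antisymm ?_ zero_le
    have hlt1 : (1 - (1/2:ENNReal)^L) < 1 := by
      apply ENNReal.sub_lt_self ENNReal.one_ne_top one_ne_zero
      exact pow_ne_zero _ (by norm_num)
    exact ge_of_tendsto' (ENNReal.tendsto_pow_atTop_nhds_zero_of_lt_one hlt1) hKbound

  have hΦapp : ∀ m ω, Φ m ω = s ^ (τ m ω) * g (Z (τ m ω) ω) := fun m ω => by rw [hΦdef]
  have hstep : ∀ n, ∫ ω, Φ (n+1) ω ∂μ = ∫ ω, Φ n ω ∂μ := by
    intro n
    set A : Set Ω := {ω | ∀ k, k ≤ n → k ∉ S ω} with hAdef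
    have hAmeas : MeasurableSet A := by
      have h : A = ⋂ k ∈ Finset.range (n+1), {ω | k ∈ S ω}ᶜ := by
        ext ω
        simp only [hAdef, Set.mem_setOf_eq, Set.mem_iInter, Set.mem_compl_iff, Finset.mem_range]
        constructor
        · intro h k hk; exact h k (by omega)
        · intro h k hk; exact h k (by omega)
      rw [h]
      exact MeasurableSet.biInter (Finset.countable_toSet _) fun k _ => (hSmes k).compl
    set F : ℤ → Ω → ℝ := fun e ω =>
      A.indicator (fun ω' => s^n * (s * g (Z n ω' + e) - g (Z n ω'))) ω with hFdef
    set G : ℤ → Ω → ℝ := fun e ω => if ξ n ω = e then (1:ℝ) else 0 with hGdef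
    have hFmeas : ∀ e, Measurable (F e) := by
      intro e
      apply Measurable.indicator ?_ hAmeas
      exact (measurable_of_countable (fun z : ℤ => s^n * (s * g (z + e) - g z))).comp (hZmeas n)
    have hGmeas : ∀ e, Measurable (G e) :=
      fun e => (measurable_of_countable (fun z : ℤ => if z = e then (1:ℝ) else 0)).comp (hmeas n)
    have hFbd : ∀ e : ℤ, (e = 1 ∨ e = -1) → ∀ ω, (∀ i, ξ i ω = 1 ∨ ξ i ω = -1) →
        ‖F e ω‖ ≤ 4 := by
      intro e he ω hω
      rw [hFdef]
      dsimp only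
      by_cases hω' : ω ∈ A
      · rw [Set.indicator_of_mem hω']
        obtain ⟨h1, h2⟩ := hIVT ω hω n hω'
        have hb1 : g (Z n ω + e) ≤ 2 := by
          rcases he with he | he <;> subst he <;> exact hg2 _ (by omega) (by omega)
        have hb0 : g (Z n ω) ≤ 2 := hg2 _ (by omega) (by omega)
        have hp1 : 0 < g (Z n ω + e) := hgpos _
        have hp0 : 0 < g (Z n ω) := hgpos _
        have hsn : 0 < s^n := pow_pos hs0 n
        have hsn1 : s^n ≤ 1 := pow_le_one₀ (le_of_lt hs0) (le_of_lt hs1)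
        rw [Real.norm_eq_abs, abs_mul, abs_of_pos hsn]
        have habs : |s * g (Z n ω + e) - g (Z n ω)| ≤ 4 :=
          abs_le.mpr ⟨by nlinarith, by nlinarith⟩
        calc s^n * |s * g (Z n ω + e) - g (Z n ω)| ≤ 1 * 4 :=
          mul_le_mul hsn1 habs (abs_nonneg _) zero_le_one
        _ = 4 := one_mul 4
      · rw [Set.indicator_of_notMem hω']
        norm_num
    have hFint : ∀ e : ℤ, (e = 1 ∨ e = -1) → Integrable (F e) μ := by
      intro e he
      refine Integrable.mono' (integrable_const 4) ((hFmeas e).aestronglyMeasurable) ?_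
      filter_upwards [hG] with ω hω
      exact hFbd e he ω hω
    have hGbd : ∀ (e : ℤ) ω, ‖G e ω‖ ≤ 1 := by
      intro e ω
      rw [hGdef]
      dsimp only
      split <;> simp
    have hGint : ∀ e : ℤ, Integrable (G e) μ := fun e =>
      Integrable.mono' (integrable_const 1) (hGmeas e).aestronglyMeasurable
        (Filter.Eventually.of_forall (hGbd e))
    have hFGint : ∀ e : ℤ, (e = 1 ∨ e = -1) → Integrable (fun ω => F e ω * G e ω) μ := by
      intro e he
      refine Integrable.mono' (integrable_const 4) (((hFmeas e).mul (hGmeas e)).aestronglyMeasurable) ?_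
      filter_upwards [hG] with ω hω
      rw [norm_mul]
      calc ‖F e ω‖ * ‖G e ω‖ ≤ 4 * 1 :=
        mul_le_mul (hFbd e he ω hω) (hGbd e ω) (norm_nonneg _) (by norm_num)
      _ = 4 := mul_one 4
    have hFGind : ∀ e : ℤ, IndepFun (F e) (G e) μ := by
      intro e
      have base := hindep.indepFun_finset (Finset.range n) {n}
        (by simp [Finset.disjoint_singleton_right]) hmeas
      set zz : (∀ _ : (Finset.range n : Finset ℕ), ℤ) → ℕ → ℤ :=
        fun v k => ∑ i ∈ Finset.range k,
          (if h : i < n then v ⟨i, Finset.mem_range.mpr h⟩ else 0) with hzzdef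
      set φ : (∀ _ : (Finset.range n : Finset ℕ), ℤ) → ℝ := fun v =>
        if (∀ k, k ≤ n → ¬(zz v k = -(a:ℤ) ∨ zz v k = (b:ℤ)))
          then s^n * (s * g (zz v n + e) - g (zz v n)) else 0 with hφdef
      set ψ : (∀ _ : ({n} : Finset ℕ), ℤ) → ℝ := fun v =>
        if v ⟨n, Finset.mem_singleton_self n⟩ = e then (1:ℝ) else 0 with hψdef
      have hcomp := base.comp (measurable_of_countable φ) (measurable_of_countable ψ)
      have hFeq : F e = fun ω => φ (fun i : (Finset.range n : Finset ℕ) => ξ i ω) := by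
        funext ω
        have hzz : ∀ k, k ≤ n →
            zz (fun i : (Finset.range n : Finset ℕ) => ξ i ω) k = Z k ω := by
          intro k hk
          rw [hZ, hzzdef]
          apply Finset.sum_congr rfl
          intro i hi
          rw [dif_pos (lt_of_lt_of_le (Finset.mem_range.mp hi) hk)]
        have hcond : (∀ k, k ≤ n →
            ¬(zz (fun i : (Finset.range n : Finset ℕ) => ξ i ω) k = -(a:ℤ) ∨
              zz (fun i : (Finset.range n : Finset ℕ) => ξ i ω) k = (b:ℤ))) ↔ ω ∈ A := by
          constructor
          · intro h k hk hkS
            apply h k hk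
            rw [hzz k hk]
            simpa [hSdef] using hkS
          · intro h k hk hc
            apply h k hk
            rw [hzz k hk] at hc
            simpa [hSdef] using hc
        rw [hFdef, hφdef]
        dsimp only
        by_cases hω' : ω ∈ A
        · rw [Set.indicator_of_mem hω', if_pos (hcond.mpr hω'), hzz n le_rfl]
        · rw [Set.indicator_of_notMem hω', if_neg (fun hc => hω' (hcond.mp hc))]
      have hGeq : G e = fun ω => ψ (fun i : ({n} : Finset ℕ) => ξ i ω) := rfl
      rw [hFeq, hGeq]
      exact hcomp
    have hGval : ∀ e : ℤ, (e = 1 ∨ e = -1) → ∫ ω, G e ω ∂μ = 1/2 := by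
      intro e he
      have hGind : G e = Set.indicator {ω | ξ n ω = e} (fun _ => (1:ℝ)) := by
        funext ω
        rw [hGdef]
        dsimp only
        by_cases h : ξ n ω = e
        · rw [if_pos h, Set.indicator_of_mem (show ω ∈ {ω' | ξ n ω' = e} from h)]
        · rw [if_neg h, Set.indicator_of_notMem (show ω ∉ {ω' | ξ n ω' = e} from h)]
      rw [hGind, integral_indicator_const (1:ℝ)
        (show MeasurableSet {ω' | ξ n ω' = e} from hmeas n (measurableSet_singleton e))]
      rcases he with he | he <;> subst he
      · rw [measureReal_def, (hdist n).1]
        rw [ENNReal.toReal_div]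
        norm_num
      · rw [measureReal_def, (hdist n).2]
        rw [ENNReal.toReal_div]
        norm_num
    have hmul : ∀ e : ℤ, (e = 1 ∨ e = -1) →
        ∫ ω, F e ω * G e ω ∂μ = (∫ ω, F e ω ∂μ) * (1/2) := by
      intro e he
      have h := (hFGind e).integral_fun_mul_eq_mul_integral (hFint e he).aestronglyMeasurable (hGint e).aestronglyMeasurable
      rw [hGval e he] at h
      exact h
    have hsum : (∫ ω, F 1 ω ∂μ) + (∫ ω, F (-1) ω ∂μ) = 0 := by
      rw [← integral_add (hFint 1 (Or.inl rfl)) (hFint (-1) (Or.inr rfl))]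
      have hz : (fun ω => F 1 ω + F (-1) ω) = fun _ => (0:ℝ) := by
        funext ω
        rw [hFdef]
        dsimp only
        by_cases hω' : ω ∈ A
        · rw [Set.indicator_of_mem hω', Set.indicator_of_mem hω']
          have hh := hharm (Z n ω)
          have hz1 : Z n ω + -1 = Z n ω - 1 := by ring
          rw [hz1]
          linear_combination (s^n) * hh
        · rw [Set.indicator_of_notMem hω', Set.indicator_of_notMem hω']
          norm_num
      rw [hz]
      exact integral_zero _ _
    have hdiff : ∀ ω, Φ (n+1) ω - Φ n ω
        = A.indicator (fun ω' => s^(n+1) * g (Z (n+1) ω') - s^n * g (Z n ω')) ω := by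
      intro ω
      by_cases hω' : ω ∈ A
      · rw [Set.indicator_of_mem hω']
        have h1 : τ n ω = n := hτ_nohit n ω hω'
        have h2 : τ (n+1) ω = n+1 := by
          apply nat_sInf_eq (by simp)
          intro j hj
          rcases hj with hj | hj
          · by_contra hc
            push_neg at hc
            exact hω' j (by omega) hj
          · simp only [Set.mem_singleton_iff] at hj
            omega
        rw [hΦapp, hΦapp, h1, h2]
      · rw [Set.indicator_of_notMem hω']
        have hex : ∃ k, k ≤ n ∧ k ∈ S ω := by
          by_contra hc
          push_neg at hc
          exact hω' (fun k hk => hc k hk)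
        obtain ⟨k, hk, hkS⟩ := hex
        have e1 := (hτ_hit n ω k hk hkS).1
        have e2 := (hτ_hit (n+1) ω k (by omega) hkS).1
        rw [hΦapp, hΦapp, e1, e2, sub_self]
    have hae : (fun ω => Φ (n+1) ω - Φ n ω)
        =ᵐ[μ] fun ω => F 1 ω * G 1 ω + F (-1) ω * G (-1) ω := by
      filter_upwards [hG] with ω hω
      rw [hdiff ω]
      have hZs : Z (n+1) ω = Z n ω + ξ n ω := by rw [hZ, hZ, Finset.sum_range_succ]
      rcases hω n with h | h
      · rw [hGdef]
        dsimp only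
        rw [if_pos h, if_neg (by rw [h]; norm_num), mul_one, mul_zero, add_zero, hFdef]
        dsimp only
        by_cases hω' : ω ∈ A
        · rw [Set.indicator_of_mem hω', Set.indicator_of_mem hω', hZs, h, pow_succ]
          ring
        · rw [Set.indicator_of_notMem hω', Set.indicator_of_notMem hω']
      · rw [hGdef]
        dsimp only
        rw [if_pos h, if_neg (by rw [h]; norm_num), mul_one, mul_zero, zero_add, hFdef]
        dsimp only
        by_cases hω' : ω ∈ A
        · rw [Set.indicator_of_mem hω', Set.indicator_of_mem hω', hZs, h, pow_succ]
          ring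
        · rw [Set.indicator_of_notMem hω', Set.indicator_of_notMem hω']
    have h0 : ∫ ω, (Φ (n+1) ω - Φ n ω) ∂μ = 0 := by
      rw [integral_congr_ae hae,
        integral_add (hFGint 1 (Or.inl rfl)) (hFGint (-1) (Or.inr rfl)),
        hmul 1 (Or.inl rfl), hmul (-1) (Or.inr rfl)]
      linarith [hsum]
    have hsub := integral_sub (hΦint (n+1)) (hΦint n)
    rw [h0] at hsub
    linarith [hsub]
  have hbase : ∫ ω, Φ 0 ω ∂μ = g 0 := by
    have h : ∀ ω, Φ 0 ω = g 0 := by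
      intro ω
      have hτ0 : τ 0 ω = 0 := Nat.le_zero.mp (hτ_le 0 ω)
      have hZ0 : Z 0 ω = 0 := by rw [hZ]; simp
      rw [hΦapp, hτ0, hZ0, pow_zero, one_mul]
    calc ∫ ω, Φ 0 ω ∂μ = ∫ _, g 0 ∂μ := by simp only [h]
    _ = g 0 := by simp
  have hall : ∀ n, ∫ ω, Φ n ω ∂μ = g 0 := by
    intro n
    induction n with
    | zero => exact hbase
    | succ n ih => rw [hstep n]; exact ih
  have hconv : Tendsto (fun n => ∫ ω, Φ n ω ∂μ) atTop (𝓝 (∫ ω, s ^ T ω ∂μ)) := by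
    apply tendsto_integral_of_dominated_convergence (bound := fun _ => (2:ℝ))
    · intro n; exact (hΦmeas n).aestronglyMeasurable
    · exact integrable_const 2
    · intro n; filter_upwards [hG] with ω hω; exact hbd ω hω n
    · filter_upwards [hG, hhit] with ω hω hne
      have hm := Nat.sInf_mem hne
      refine Filter.Tendsto.congr' ?_ (tendsto_const_nhds (x := s ^ T ω))
      rw [Filter.EventuallyEq, eventually_atTop]
      refine ⟨sInf (S ω), fun n hn => ?_⟩
      have hτn : τ n ω = sInf (S ω) := (hτ_hit n ω (sInf (S ω)) hn hm).1
      have hTω : T ω = sInf (S ω) := hT ω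
      have hgval : g (Z (sInf (S ω)) ω) = 1 := by
        apply hgb
        simpa [hSdef] using hm
      rw [hΦapp, hτn, hgval, hTω, mul_one]
  have hfinal : ∫ ω, s ^ T ω ∂μ = g 0 := by
    apply tendsto_nhds_unique hconv
    rw [show (fun n => ∫ ω, Φ n ω ∂μ) = fun _ => g 0 from funext hall]
    exact tendsto_const_nhds
  rw [hfinal, hgdef]
  push_cast
  norm_num
end

section
/- For every positive integer c, 2^{2c} ∫_0^∞ (e^x/(e^x+1)^2)^c dx = Σ_{j=0}^{c-1} binom(c-1, j) (1/(j - 2c + 1)) 2^{j+1} (-1)^{c-j}. -/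
open Real Filter MeasureTheory Finset

theorem J_one_integer_c (c : ℕ) (hc : 0 < c) :
    (2 : ℝ) ^ (2 * c) * ∫ x in Set.Ioi (0:ℝ), (Real.exp x / (Real.exp x + 1)^2) ^ c
      = ∑ j ∈ Finset.range c,
          ((c - 1).choose j : ℝ) * (1 / ((j : ℝ) - 2 * c + 1))
            * 2 ^ (j + 1) * (-1 : ℝ) ^ (c - j) := by
  set p : ℕ → ℝ := fun j => (j : ℝ) - 2 * c + 1 with hpdef
  have hpneg : ∀ j ∈ Finset.range c, p j < 0 := by
    intro j hj
    rw [Finset.mem_range] at hj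
    have : (j : ℝ) < c := by exact_mod_cast hj
    have hcc : (1:ℝ) ≤ (c:ℝ) := by exact_mod_cast hc
    simp only [hpdef]
    nlinarith
  set g : ℝ → ℝ := fun x => ∑ j ∈ Finset.range c,
      ((c - 1).choose j : ℝ) * (-1 : ℝ) ^ (j + (c - 1)) *
        (Real.exp x + 1) ^ (p j) / (p j) with hgdef
  -- derivative of g
  have hderiv : ∀ x : ℝ, HasDerivAt g
      ((Real.exp x / (Real.exp x + 1)^2) ^ c) x := by
    intro x
    have hu : (0:ℝ) < Real.exp x + 1 := by positivity
    have h1 : HasDerivAt (fun x : ℝ => Real.exp x + 1) (Real.exp x) x :=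
      (Real.hasDerivAt_exp x).add_const 1
    have hsum : HasDerivAt g
        (∑ j ∈ Finset.range c, ((c - 1).choose j : ℝ) * (-1 : ℝ) ^ (j + (c - 1)) *
          (Real.exp x * (p j) * (Real.exp x + 1) ^ (p j - 1) / (p j))) x := by
      apply HasDerivAt.fun_sum
      intro j hj
      have h2 := (h1.rpow_const (p := p j) (Or.inl hu.ne'))
      simpa [mul_div_assoc] using (h2.const_mul
        (((c - 1).choose j : ℝ) * (-1 : ℝ) ^ (j + (c - 1)))).div_const (p j)
    convert hsum using 1
    have hrange : Finset.range c = Finset.range ((c-1)+1) := by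
      congr 1; omega
    have key : ∀ j ∈ Finset.range c,
        ((c - 1).choose j : ℝ) * (-1 : ℝ) ^ (j + (c - 1)) *
          (Real.exp x * (p j) * (Real.exp x + 1) ^ (p j - 1) / (p j))
        = (Real.exp x / (Real.exp x + 1)^2) *
          ((-1:ℝ) ^ (j + (c-1)) * (Real.exp x + 1) ^ j * (1:ℝ)^((c-1)-j) * ((c-1).choose j : ℝ))
            / (Real.exp x + 1) ^ (2*(c-1)) := by
      intro j hj
      have hpne : p j ≠ 0 := (hpneg j hj).ne
      have e1 : (Real.exp x + 1) ^ (p j - 1)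
          = (Real.exp x + 1) ^ (j : ℕ) / (Real.exp x + 1) ^ (2*c : ℕ) := by
        have : p j - 1 = (j : ℝ) - ((2*c : ℕ) : ℝ) := by
          simp only [hpdef]; push_cast; ring
        rw [this, Real.rpow_sub hu, Real.rpow_natCast, Real.rpow_natCast]
      rw [e1]
      have h2c : (2*c : ℕ) = 2*(c-1) + 2 := by omega
      rw [h2c]
      field_simp
      ring
    rw [Finset.sum_congr rfl key, ← Finset.sum_div, ← Finset.mul_sum]
    rw [hrange, ← sub_pow (Real.exp x + 1) 1 (c-1)]
    have : Real.exp x + 1 - 1 = Real.exp x := by ring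
    rw [this]
    have hc1 : c = (c - 1) + 1 := by omega
    rw [div_pow, hc1, pow_succ, pow_succ', pow_mul]
    have hne : ((Real.exp x + 1)^2 : ℝ) ≠ 0 := by positivity
    have hne2 : (((Real.exp x + 1)^2)^(c-1) : ℝ) ≠ 0 := by positivity
    field_simp
    simp only [Nat.add_sub_cancel, Nat.add_sub_cancel_left]
    ring
  -- limit at infinity
  have htend : Tendsto g atTop (nhds 0) := by
    have : Tendsto (fun x : ℝ => Real.exp x + 1) atTop atTop :=
      tendsto_atTop_add_const_right _ 1 Real.tendsto_exp_atTop
    have hterm : ∀ j ∈ Finset.range c, Tendsto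
        (fun x : ℝ => ((c - 1).choose j : ℝ) * (-1 : ℝ) ^ (j + (c - 1)) *
          (Real.exp x + 1) ^ (p j) / (p j)) atTop (nhds 0) := by
      intro j hj
      have h0 : Tendsto (fun u : ℝ => u ^ (p j)) atTop (nhds 0) := by
        have := tendsto_rpow_neg_atTop (y := -(p j)) (by linarith [hpneg j hj])
        simpa using this
      have := ((h0.comp this).const_mul
        (((c - 1).choose j : ℝ) * (-1 : ℝ) ^ (j + (c - 1)))).div_const (p j)
      simpa [Function.comp] using this
    have := tendsto_finset_sum (Finset.range c) hterm
    simpa using this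
  -- continuity at 0
  have hcont : ContinuousWithinAt g (Set.Ici 0) 0 :=
    ((hderiv 0).continuousAt).continuousWithinAt
  have hnn : ∀ x ∈ Set.Ioi (0:ℝ), 0 ≤ (Real.exp x / (Real.exp x + 1)^2) ^ c := by
    intro x _; positivity
  have hint := integral_Ioi_of_hasDerivAt_of_nonneg hcont
    (fun x _ => hderiv x) hnn htend
  rw [hint]
  -- final algebra
  rw [hgdef]
  simp only [Real.exp_zero, zero_sub, ← Finset.sum_neg_distrib, Finset.mul_sum]
  apply Finset.sum_congr rfl
  intro j hj
  rw [Finset.mem_range] at hj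
  have h21 : (1:ℝ) + 1 = 2 := by norm_num
  have hpne : p j ≠ 0 := (hpneg j (Finset.mem_range.mpr hj)).ne
  have e2 : (2:ℝ) ^ (2*c) * (2:ℝ) ^ (p j) = (2:ℝ) ^ (j+1) := by
    rw [← Real.rpow_natCast 2 (2*c), ← Real.rpow_natCast 2 (j+1),
      ← Real.rpow_add (by norm_num : (0:ℝ) < 2)]
    congr 1
    simp only [hpdef]; push_cast; ring
  have esign : (-1:ℝ) ^ (c - j) = -(-1:ℝ) ^ (j + (c - 1)) := by
    have e1 : c - j + 2*j = c + j := by omega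
    have e3 : c + j = (j + (c-1)) + 1 := by omega
    have : (-1:ℝ)^(c-j) = (-1:ℝ)^(c-j+2*j) := by
      rw [pow_add, pow_mul]; norm_num
    rw [this, e1, e3, pow_succ]
    ring
  rw [h21, esign]
  rw [show ((c - 1).choose j : ℝ) * (1 / p j) * 2 ^ (j + 1) * -(-1:ℝ) ^ (j + (c-1))
      = -(2 ^ (2*c) * 2 ^ (p j) * (((c - 1).choose j : ℝ) * (-1:ℝ)^(j+(c-1)) / p j))
      from by rw [← e2]; ring]
  ring
end

section
/- For s ∈ (0,1), d_s = log((1 + sqrt(1-s^2))/s), and any real x > 0, the quantity g_x(s) := (e^{d_s} + e^{d_s(x-1)})/(1 + e^{d_s x}) satisfies g_x(s) = (1/s)(1 - a(d_s x) sqrt(1 - s^2)), where a(y) = (e^y - 1)/(e^y + 1). -/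
theorem g_x_formula (s x : ℝ) (hs : s ∈ Set.Ioo (0:ℝ) 1) (hx : 0 < x) :
    (Real.exp (Real.log ((1 + Real.sqrt (1 - s^2)) / s))
        + Real.exp (Real.log ((1 + Real.sqrt (1 - s^2)) / s) * (x - 1)))
      / (1 + Real.exp (Real.log ((1 + Real.sqrt (1 - s^2)) / s) * x))
    = (1 / s) *
        (1 - ((Real.exp (Real.log ((1 + Real.sqrt (1 - s^2)) / s) * x) - 1)
              / (Real.exp (Real.log ((1 + Real.sqrt (1 - s^2)) / s) * x) + 1))
            * Real.sqrt (1 - s^2)) := by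
  obtain ⟨hs0, hs1⟩ := hs
  set r := Real.sqrt (1 - s^2) with hrdef
  set d := Real.log ((1 + r) / s) with hddef
  have hr0 : 0 ≤ r := Real.sqrt_nonneg _
  have hr2 : r ^ 2 = 1 - s ^ 2 := Real.sq_sqrt (by nlinarith)
  have hpos : 0 < (1 + r) / s := by positivity
  have hed : Real.exp d = (1 + r) / s := Real.exp_log hpos
  have hE : 0 < Real.exp (d * x) := Real.exp_pos _
  have hsplit : Real.exp (d * (x - 1)) = Real.exp (d * x) / Real.exp d := by
    rw [← Real.exp_sub]; ring_nf
  rw [hsplit, hed]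
  have h1r : 0 < 1 + r := by linarith
  have hE1 : 0 < 1 + Real.exp (d * x) := by linarith
  field_simp
  linear_combination (Real.exp (d * x) * (Real.exp (d * x) + 1)) * hr2
end

section
/- Let R_n be the range (max minus min) of the once-reinforced random walk on ℤ with parameter c = 1 (i.e., the simple symmetric random walk), and S_k = inf{n : R_n = k}. Then E[S_k] = binom(k+1, 2) = k(k+1)/2 for every k ≥ 1. -/
open Finset

noncomputable section RW

/-- prefix sum path -/
def pX (s : ℕ → ℤ) (n : ℕ) : ℤ := ∑ i ∈ Finset.range n, s i

/-- running max -/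
def pB (s : ℕ → ℤ) (n : ℕ) : ℤ :=
  (Finset.range (n+1)).sup' Finset.nonempty_range_add_one (pX s)

/-- running min -/
def pA (s : ℕ → ℤ) (n : ℕ) : ℤ :=
  (Finset.range (n+1)).inf' Finset.nonempty_range_add_one (pX s)

/-- range -/
def pR (s : ℕ → ℤ) (n : ℕ) : ℤ := pB s n - pA s n

/-- martingale value at time m -/
def pN (s : ℕ → ℤ) (m : ℕ) : ℤ :=
  2*(pX s m - pA s m)*(pB s m - pX s m) - pR s m * (pR s m + 1) + 2*m

/-- truncated stopping time -/
def pT (k n : ℕ) (s : ℕ → ℤ) : ℕ := sInf ({m | pR s m = (k:ℤ)} ∪ {n})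

lemma pX_succ (s : ℕ → ℤ) (n : ℕ) : pX s (n+1) = pX s n + s n := by
  simp [pX, Finset.sum_range_succ]

lemma pB_succ (s : ℕ → ℤ) (n : ℕ) : pB s (n+1) = max (pB s n) (pX s (n+1)) := by
  show (Finset.range (n+1+1)).sup' _ _ = _
  simp only [Finset.range_add_one (n := n+1)]
  rw [Finset.sup'_insert]
  exact max_comm _ _

lemma pA_succ (s : ℕ → ℤ) (n : ℕ) : pA s (n+1) = min (pA s n) (pX s (n+1)) := by
  show (Finset.range (n+1+1)).inf' _ _ = _
  simp only [Finset.range_add_one (n := n+1)]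
  rw [Finset.inf'_insert]
  exact min_comm _ _

lemma pA_le_pX (s : ℕ → ℤ) (n : ℕ) : pA s n ≤ pX s n :=
  Finset.inf'_le _ (by simp)

lemma pX_le_pB (s : ℕ → ℤ) (n : ℕ) : pX s n ≤ pB s n :=
  Finset.le_sup' _ (by simp)

lemma pB_zero (s : ℕ → ℤ) : pB s 0 = 0 := by simp [pB, pX]
lemma pA_zero (s : ℕ → ℤ) : pA s 0 = 0 := by simp [pA, pX]
lemma pR_zero (s : ℕ → ℤ) : pR s 0 = 0 := by simp [pR, pB_zero, pA_zero]
lemma pN_zero (s : ℕ → ℤ) : pN s 0 = 0 := by simp [pN, pR_zero, pB_zero, pA_zero, pX]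

end RW

section RW2
open Function

lemma pX_congr {s s' : ℕ → ℤ} {m : ℕ} (h : ∀ i < m, s i = s' i) {j : ℕ} (hj : j ≤ m) :
    pX s j = pX s' j := by
  apply Finset.sum_congr rfl
  intro i hi
  exact h i (lt_of_lt_of_le (Finset.mem_range.mp hi) hj)

lemma pB_congr {s s' : ℕ → ℤ} {m : ℕ} (h : ∀ i < m, s i = s' i) {j : ℕ} (hj : j ≤ m) :
    pB s j = pB s' j := by
  apply Finset.sup'_congr _ rfl
  intro i hi
  exact pX_congr h (le_trans (Nat.lt_succ_iff.mp (Finset.mem_range.mp hi)) hj)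

lemma pA_congr {s s' : ℕ → ℤ} {m : ℕ} (h : ∀ i < m, s i = s' i) {j : ℕ} (hj : j ≤ m) :
    pA s j = pA s' j := by
  apply Finset.inf'_congr _ rfl
  intro i hi
  exact pX_congr h (le_trans (Nat.lt_succ_iff.mp (Finset.mem_range.mp hi)) hj)

lemma pR_congr {s s' : ℕ → ℤ} {m : ℕ} (h : ∀ i < m, s i = s' i) {j : ℕ} (hj : j ≤ m) :
    pR s j = pR s' j := by
  rw [pR, pR, pB_congr h hj, pA_congr h hj]

lemma pN_congr {s s' : ℕ → ℤ} {m : ℕ} (h : ∀ i < m, s i = s' i) {j : ℕ} (hj : j ≤ m) :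
    pN s j = pN s' j := by
  rw [pN, pN, pB_congr h hj, pA_congr h hj, pX_congr h hj, pR_congr h hj]

lemma pT_le (k n : ℕ) (s : ℕ → ℤ) : pT k n s ≤ n :=
  Nat.sInf_le (by simp [pT])

lemma pT_hit {k n : ℕ} {s : ℕ → ℤ} (h : ∃ m ≤ n, pR s m = (k:ℤ)) :
    pT k n s = sInf {m | pR s m = (k:ℤ)} ∧ pR s (pT k n s) = (k:ℤ) ∧
      pT k (n+1) s = pT k n s := by
  obtain ⟨m, hm, hrm⟩ := h
  have hne : {m | pR s m = (k:ℤ)}.Nonempty := ⟨m, hrm⟩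
  have he : sInf {m | pR s m = (k:ℤ)} ≤ n := le_trans (Nat.sInf_le hrm) hm
  have key : ∀ j : ℕ, sInf {m | pR s m = (k:ℤ)} ≤ j → pT k j s = sInf {m | pR s m = (k:ℤ)} := by
    intro j hj
    apply le_antisymm
    · exact Nat.sInf_le (Or.inl (Nat.sInf_mem hne))
    · apply le_csInf ⟨j, Or.inr rfl⟩
      rintro x (hx | hx)
      · exact Nat.sInf_le hx
      · rw [Set.mem_singleton_iff] at hx
        omega
  have h1 := key n he
  have h2 := key (n+1) (le_trans he (Nat.le_succ n))
  refine ⟨h1, ?_, by rw [h1, h2]⟩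
  rw [h1]
  exact Nat.sInf_mem hne

lemma pT_miss {k n : ℕ} {s : ℕ → ℤ} (h : ∀ m ≤ n, pR s m ≠ (k:ℤ)) :
    pT k n s = n ∧ pT k (n+1) s = n + 1 := by
  constructor
  · apply le_antisymm (pT_le k n s)
    apply le_csInf ⟨n, Or.inr rfl⟩
    rintro x (hx | hx)
    · by_contra hlt
      exact h x (by omega) hx
    · rw [Set.mem_singleton_iff] at hx
      omega
  · apply le_antisymm (pT_le k (n+1) s)
    apply le_csInf ⟨n+1, Or.inr rfl⟩
    rintro x (hx | hx)
    · by_contra hlt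
      exact h x (by omega) hx
    · rw [Set.mem_singleton_iff] at hx
      omega

lemma pT_congr {s s' : ℕ → ℤ} {k n : ℕ} (h : ∀ i < n, s i = s' i) :
    pT k n s = pT k n s' := by
  have hr : ∀ m ≤ n, pR s m = pR s' m := fun m hm => pR_congr h hm
  by_cases hc : ∃ m ≤ n, pR s m = (k:ℤ)
  · obtain ⟨m, hm, hrm⟩ := hc
    have h1 := pT_hit (s := s) ⟨m, hm, hrm⟩
    have h2 := pT_hit (s := s') ⟨m, hm, by rw [← hr m hm]; exact hrm⟩
    rw [h1.1, h2.1]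
    have hs : sInf {m | pR s m = (k:ℤ)} ≤ m := Nat.sInf_le hrm
    have hs' : sInf {m | pR s' m = (k:ℤ)} ≤ m := Nat.sInf_le (show pR s' m = (k:ℤ) by rw [← hr m hm]; exact hrm)
    have m1 : sInf {m | pR s' m = (k:ℤ)} ∈ {m | pR s m = (k:ℤ)} := by
      have := Nat.sInf_mem (⟨m, show pR s' m = (k:ℤ) by rw [← hr m hm]; exact hrm⟩ : {m | pR s' m = (k:ℤ)}.Nonempty)
      simpa [Set.mem_setOf_eq, hr _ (le_trans hs' hm)] using this
    have m2 : sInf {m | pR s m = (k:ℤ)} ∈ {m | pR s' m = (k:ℤ)} := by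
      have := Nat.sInf_mem (⟨m, hrm⟩ : {m | pR s m = (k:ℤ)}.Nonempty)
      simpa [Set.mem_setOf_eq, ← hr _ (le_trans hs hm)] using this
    exact le_antisymm (Nat.sInf_le m1) (Nat.sInf_le m2)
  · push_neg at hc
    have hc' : ∀ m ≤ n, pR s' m ≠ (k:ℤ) := fun m hm => by rw [← hr m hm]; exact hc m hm
    rw [(pT_miss hc).1, (pT_miss hc').1]

end RW2

section RW3
open Function

lemma pN_step (s : ℕ → ℤ) (n : ℕ) :
    pN (Function.update s n 1) (n+1) + pN (Function.update s n (-1)) (n+1) = 2 * pN s n := by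
  have hcong : ∀ c : ℤ, ∀ i < n, (Function.update s n c) i = s i := by
    intro c i hi
    exact Function.update_of_ne (by omega) _ _
  have hX : ∀ c : ℤ, pX (Function.update s n c) (n+1) = pX s n + c := by
    intro c
    rw [pX_succ, Function.update_self, pX_congr (hcong c) (le_refl n)]
  have hB : ∀ c : ℤ, pB (Function.update s n c) (n+1) = max (pB s n) (pX s n + c) := by
    intro c
    rw [pB_succ, hX, pB_congr (hcong c) (le_refl n)]
  have hA : ∀ c : ℤ, pA (Function.update s n c) (n+1) = min (pA s n) (pX s n + c) := by
    intro c
    rw [pA_succ, hX, pA_congr (hcong c) (le_refl n)]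
  have hax := pA_le_pX s n
  have hxb := pX_le_pB s n
  have h1 : max (pB s n) (pX s n + -1) = pB s n := max_eq_left (by omega)
  have h2 : min (pA s n) (pX s n + 1) = pA s n := min_eq_left (by omega)
  simp only [pN, pR, hX, hB, hA, h1, h2]
  rcases eq_or_lt_of_le hxb with hb | hb
  · have h3 : max (pB s n) (pX s n + 1) = pX s n + 1 := max_eq_right (by omega)
    rcases eq_or_lt_of_le hax with ha | ha
    · have h4 : min (pA s n) (pX s n + -1) = pX s n + -1 := min_eq_right (by omega)
      rw [h3, h4, ← hb, ha]
      push_cast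
      ring
    · have h4 : min (pA s n) (pX s n + -1) = pA s n := min_eq_left (by omega)
      rw [h3, h4, ← hb]
      push_cast
      ring
  · have h3 : max (pB s n) (pX s n + 1) = pB s n := max_eq_left (by omega)
    rcases eq_or_lt_of_le hax with ha | ha
    · have h4 : min (pA s n) (pX s n + -1) = pX s n + -1 := min_eq_right (by omega)
      rw [h3, h4, ha]
      push_cast
      ring
    · have h4 : min (pA s n) (pX s n + -1) = pA s n := min_eq_left (by omega)
      rw [h3, h4]
      push_cast
      ring

end RW3

section RW4
open Function

/-- pairs where range first changes, the walker is at an extreme -/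
lemma extreme_of_pR_ne {s : ℕ → ℤ} {m : ℕ} (h : pR s (m+1) ≠ pR s m) :
    pX s (m+1) = pB s (m+1) ∨ pX s (m+1) = pA s (m+1) := by
  have hB := pB_succ s m
  have hA := pA_succ s m
  rcases max_cases (pB s m) (pX s (m+1)) with ⟨h1, h2⟩ | ⟨h1, h2⟩ <;>
    rcases min_cases (pA s m) (pX s (m+1)) with ⟨h3, h4⟩ | ⟨h3, h4⟩
  · exfalso
    apply h
    rw [pR, pR, hA, hB, h1, h3]
  · right
    omega
  · left
    omega
  · left
    omega

lemma pN_at_hit {s : ℕ → ℤ} {k : ℕ} (hk : 1 ≤ k)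
    (hne : {m | pR s m = (k:ℤ)}.Nonempty) :
    pN s (sInf {m | pR s m = (k:ℤ)}) =
      -((k:ℤ) * (k+1)) + 2 * (sInf {m | pR s m = (k:ℤ)}) := by
  set T := sInf {m | pR s m = (k:ℤ)} with hT
  have hmem : pR s T = (k:ℤ) := Nat.sInf_mem hne
  have hT1 : T ≠ 0 := by
    intro h0
    rw [h0, pR_zero] at hmem
    omega
  obtain ⟨m, hm⟩ : ∃ m, T = m + 1 := ⟨T - 1, by omega⟩
  have hprev : pR s m ≠ (k:ℤ) := by
    intro hc
    have := Nat.sInf_le (show m ∈ {m | pR s m = (k:ℤ)} from hc)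
    omega
  have hne' : pR s (m+1) ≠ pR s m := by rw [← hm, hmem]; exact fun hc => hprev hc.symm
  have hext := extreme_of_pR_ne hne'
  rw [pN, ← hm] at *
  rcases hext with hx | hx <;> rw [← hm] at hx <;> rw [hx, hmem] <;> ring

/-- range is nonneg -/
lemma pR_nonneg (s : ℕ → ℤ) (n : ℕ) : 0 ≤ pR s n := by
  have := pA_le_pX s n
  have := pX_le_pB s n
  rw [pR]
  omega

/-- range increments by 0 or 1 under ±1 steps -/
lemma pR_succ_bound {s : ℕ → ℤ} {n : ℕ} (hg : s n = 1 ∨ s n = -1) :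
    pR s n ≤ pR s (n+1) ∧ pR s (n+1) ≤ pR s n + 1 := by
  have hB := pB_succ s n
  have hA := pA_succ s n
  have hX := pX_succ s n
  have hax := pA_le_pX s n
  have hxb := pX_le_pB s n
  rcases max_cases (pB s n) (pX s (n+1)) with ⟨h1, h2⟩ | ⟨h1, h2⟩ <;>
    rcases min_cases (pA s n) (pX s (n+1)) with ⟨h3, h4⟩ | ⟨h3, h4⟩ <;>
    rcases hg with hg | hg <;>
    simp only [pR] <;> omega

/-- range stays ≤ k up to the truncated stopping time -/
lemma pR_le_k {s : ℕ → ℤ} {k n : ℕ} (hg : ∀ i, s i = 1 ∨ s i = -1) :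
    ∀ m ≤ pT k n s, pR s m ≤ (k:ℤ) := by
  intro m hm
  induction m with
  | zero => rw [pR_zero]; positivity
  | succ j ih =>
    have hjlt : j < pT k n s := by omega
    have hj : pR s j ≤ (k:ℤ) := ih (by omega)
    have hne : pR s j ≠ (k:ℤ) := by
      intro hc
      have : pT k n s ≤ j := Nat.sInf_le (Or.inl hc)
      omega
    have := pR_succ_bound (s := s) (n := j) (hg j)
    omega

end RW4

section RW5
open Function Classical in
/-- Finset of ±1 sequences of length n, padded with 1 -/
noncomputable def atoms : ℕ → Finset (ℕ → ℤ)
  | 0 => {fun _ => 1}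
  | n+1 => ((atoms n) ×ˢ ({1, -1} : Finset ℤ)).image (fun p => Function.update p.1 n p.2)

lemma atoms_mem {n : ℕ} {s : ℕ → ℤ} (h : s ∈ atoms n) :
    (∀ i < n, s i = 1 ∨ s i = -1) ∧ ∀ i, n ≤ i → s i = 1 := by
  induction n generalizing s with
  | zero =>
    simp only [atoms, Finset.mem_singleton] at h
    subst h
    exact ⟨by omega, fun _ _ => rfl⟩
  | succ n ih =>
    classical
    simp only [atoms, Finset.mem_image] at h
    obtain ⟨⟨t, c⟩, hmem, heq⟩ := h
    rw [Finset.mem_product] at hmem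
    obtain ⟨ht, hc⟩ := hmem
    have hc' : c = 1 ∨ c = -1 := by
      rcases Finset.mem_insert.mp hc with h | h
      · exact Or.inl h
      · exact Or.inr (Finset.mem_singleton.mp h)
    obtain ⟨ht1, ht2⟩ := ih ht
    subst heq
    constructor
    · intro i hi
      by_cases hin : i = n
      · subst hin
        simpa using hc'
      · rw [Function.update_of_ne hin]
        exact ht1 i (by omega)
    · intro i hi
      rw [Function.update_of_ne (by omega)]
      exact ht2 i (by omega)

open Classical in
lemma atoms_sum_succ (n : ℕ) (G : (ℕ → ℤ) → ℤ) :
    ∑ s ∈ atoms (n+1), G s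
      = ∑ s ∈ atoms n, (G (Function.update s n 1) + G (Function.update s n (-1))) := by
  classical
  rw [show atoms (n+1) = ((atoms n) ×ˢ ({1, -1} : Finset ℤ)).image
      (fun p => Function.update p.1 n p.2) from rfl]
  rw [Finset.sum_image]
  · rw [Finset.sum_product]
    apply Finset.sum_congr rfl
    intro s hs
    rw [show ({1, -1} : Finset ℤ) = insert 1 {-1} from rfl, Finset.sum_insert (by decide),
      Finset.sum_singleton]
  · rintro ⟨t, c⟩ hm ⟨t', c'⟩ hm' heq
    rw [Finset.mem_coe, Finset.mem_product] at hm hm'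
    have ht := (atoms_mem hm.1).2 n le_rfl
    have ht' := (atoms_mem hm'.1).2 n le_rfl
    have hcc : c = c' := by
      have := congrFun heq n
      simpa using this
    have htt : t = t' := by
      funext i
      by_cases hin : i = n
      · subst hin
        exact ht.trans ht'.symm
      · have : Function.update t n c i = Function.update t' n c' i := congrFun heq i
        rwa [Function.update_of_ne hin, Function.update_of_ne hin] at this
    simp [hcc, htt]

lemma key_sum (k : ℕ) : ∀ n : ℕ, ∑ s ∈ atoms n, pN s (pT k n s) = 0 := by
  intro n
  induction n with
  | zero =>
    have h0 : ∀ s : ℕ → ℤ, pT k 0 s = 0 := by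
      intro s
      exact Nat.le_zero.mp (pT_le k 0 s)
    simp [atoms, h0, pN_zero]
  | succ n ih =>
    rw [atoms_sum_succ n (fun s => pN s (pT k (n+1) s))]
    have hterm : ∀ s ∈ atoms n,
        pN (Function.update s n 1) (pT k (n+1) (Function.update s n 1))
          + pN (Function.update s n (-1)) (pT k (n+1) (Function.update s n (-1)))
        = 2 * pN s (pT k n s) := by
      intro s hs
      have hcong : ∀ c : ℤ, ∀ i < n, (Function.update s n c) i = s i := fun c i hi =>
        Function.update_of_ne (by omega) _ _
      by_cases hc : ∃ m ≤ n, pR s m = (k:ℤ)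
      · obtain ⟨m, hm, hrm⟩ := hc
        have hit : ∀ c : ℤ, ∃ m ≤ n, pR (Function.update s n c) m = (k:ℤ) := by
          intro c
          exact ⟨m, hm, by rw [pR_congr (hcong c) hm]; exact hrm⟩
        have hstep : ∀ c : ℤ, pN (Function.update s n c) (pT k (n+1) (Function.update s n c))
            = pN s (pT k n s) := by
          intro c
          have h1 := pT_hit (hit c)
          have h2 : pT k n (Function.update s n c) = pT k n s := pT_congr (hcong c)
          rw [h1.2.2, h2, pN_congr (hcong c) (pT_le k n s)]
        rw [hstep 1, hstep (-1)]
        ring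
      · push_neg at hc
        have hmiss : ∀ c : ℤ, pT k (n+1) (Function.update s n c) = n + 1 := by
          intro c
          refine (pT_miss (fun m hm => ?_)).2
          rw [pR_congr (hcong c) hm]
          exact hc m hm
        rw [hmiss 1, hmiss (-1), (pT_miss hc).1, pN_step]
    rw [Finset.sum_congr rfl hterm, ← Finset.mul_sum, ih, mul_zero]

end RW5

section RW6
open Function MeasureTheory ProbabilityTheory
open scoped ENNReal

lemma mem_atoms_of {n : ℕ} {s : ℕ → ℤ} (h1 : ∀ i < n, s i = 1 ∨ s i = -1)
    (h2 : ∀ i, n ≤ i → s i = 1) : s ∈ atoms n := by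
  classical
  induction n generalizing s with
  | zero =>
    simp only [atoms, Finset.mem_singleton]
    funext i
    exact h2 i (Nat.zero_le i)
  | succ n ih =>
    simp only [atoms, Finset.mem_image]
    refine ⟨(Function.update s n 1, s n), ?_, ?_⟩
    · rw [Finset.mem_product]
      constructor
      · apply ih
        · intro i hi
          show Function.update s n 1 i = 1 ∨ Function.update s n 1 i = -1
          rw [Function.update_of_ne (by omega)]
          exact h1 i (by omega)
        · intro i hi
          show Function.update s n 1 i = 1
          by_cases hin : i = n
          · subst hin
            exact Function.update_self _ _ _
          · rw [Function.update_of_ne hin]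
            exact h2 i (by omega)
      · show s n ∈ ({1, -1} : Finset ℤ)
        rcases h1 n (by omega) with h | h <;> simp [h]
    · show Function.update (Function.update s n 1) n (s n) = s
      funext i
      by_cases hin : i = n
      · subst hin
        simp
      · simp [Function.update_of_ne hin]

lemma ae_good {Ω : Type*} [MeasurableSpace Ω] (μ : Measure Ω) [IsProbabilityMeasure μ]
    (ξ : ℕ → Ω → ℤ) (hmeas : ∀ i, Measurable (ξ i))
    (hdist : ∀ i, μ {ω | ξ i ω = 1} = 1/2 ∧ μ {ω | ξ i ω = -1} = 1/2) :
    ∀ᵐ ω ∂μ, ∀ i, ξ i ω = 1 ∨ ξ i ω = -1 := by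
  rw [MeasureTheory.ae_all_iff]
  intro i
  have h1 : MeasurableSet {ω | ξ i ω = 1} := (hmeas i) (measurableSet_singleton 1)
  have h2 : MeasurableSet {ω | ξ i ω = -1} := (hmeas i) (measurableSet_singleton (-1))
  have hdis : Disjoint {ω | ξ i ω = 1} {ω | ξ i ω = -1} := by
    rw [Set.disjoint_left]
    intro ω hω1 hω2
    simp only [Set.mem_setOf_eq] at hω1 hω2
    rw [hω1] at hω2
    norm_num at hω2
  have hunion : μ ({ω | ξ i ω = 1} ∪ {ω | ξ i ω = -1}) = 1 := by
    rw [measure_union hdis h2, (hdist i).1, (hdist i).2]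
    norm_num [ENNReal.inv_two_add_inv_two]
  have hc : μ ({ω | ξ i ω = 1} ∪ {ω | ξ i ω = -1})ᶜ = 0 :=
    (prob_compl_eq_zero_iff (h1.union h2)).mpr hunion
  refine MeasureTheory.measure_mono_null ?_ hc
  intro ω hω
  simp only [Set.mem_compl_iff, Set.mem_union, Set.mem_setOf_eq] at *
  tauto

end RW6

section RW7
open Function MeasureTheory ProbabilityTheory
open scoped ENNReal

lemma bridge {Ω : Type*} [MeasurableSpace Ω] (μ : Measure Ω) [IsProbabilityMeasure μ]
    (ξ : ℕ → Ω → ℤ) (hmeas : ∀ i, Measurable (ξ i))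
    (hindep : iIndepFun ξ μ)
    (hdist : ∀ i, μ {ω | ξ i ω = 1} = 1/2 ∧ μ {ω | ξ i ω = -1} = 1/2)
    (n : ℕ) (F : (ℕ → ℤ) → ℤ)
    (hF : ∀ s s' : ℕ → ℤ, (∀ i < n, s i = s' i) → F s = F s') :
    Integrable (fun ω => (F (fun i => ξ i ω) : ℝ)) μ ∧
    ∫ ω, (F (fun i => ξ i ω) : ℝ) ∂μ = (1/2:ℝ)^n * ∑ s ∈ atoms n, (F s : ℝ) := by
  classical
  set A : (ℕ → ℤ) → Set Ω := fun s => ⋂ i ∈ Finset.range n, (ξ i)⁻¹' {s i} with hA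
  have hAmeas : ∀ s, MeasurableSet (A s) := fun s =>
    MeasurableSet.biInter (Finset.range n).countable_toSet
      (fun i _ => (hmeas i) (measurableSet_singleton _))
  have hAmu : ∀ s ∈ atoms n, μ (A s) = (1/2 : ℝ≥0∞)^n := by
    intro s hs
    rw [hA]
    rw [hindep.meas_biInter (S := Finset.range n)
      (fun i hi => ⟨{s i}, measurableSet_singleton _, rfl⟩)]
    have heach : ∀ i ∈ Finset.range n, μ ((ξ i)⁻¹' {s i}) = 1/2 := by
      intro i hi
      rcases (atoms_mem hs).1 i (Finset.mem_range.mp hi) with h | h <;> rw [h]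
      · exact (hdist i).1
      · exact (hdist i).2
    rw [Finset.prod_congr rfl heach, Finset.prod_const, Finset.card_range]
  set g : Ω → ℝ := fun ω => ∑ s ∈ atoms n, Set.indicator (A s) (fun _ => (F s : ℝ)) ω with hg
  have hae : (fun ω => (F (fun i => ξ i ω) : ℝ)) =ᵐ[μ] g := by
    filter_upwards [ae_good μ ξ hmeas hdist] with ω hω
    set s₀ : ℕ → ℤ := fun i => if i < n then ξ i ω else 1 with hs₀
    have hs₀mem : s₀ ∈ atoms n := by
      apply mem_atoms_of
      · intro i hi
        simpa [hs₀, hi] using hω i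
      · intro i hi
        simp [hs₀]
        omega
    have hω0 : ω ∈ A s₀ := by
      rw [hA]
      simp only [Set.mem_iInter, Set.mem_preimage, Set.mem_singleton_iff, Finset.mem_range]
      intro i hi
      simp [hs₀, hi]
    have hgω : g ω = (F s₀ : ℝ) := by
      show (∑ s ∈ atoms n, (A s).indicator (fun _ => (F s : ℝ)) ω) = (F s₀ : ℝ)
      rw [Finset.sum_eq_single s₀]
      · rw [Set.indicator_of_mem hω0]
      · intro s hs hne
        apply Set.indicator_of_notMem
        intro hωs
        apply hne
        funext i
        by_cases hi : i < n
        · have h1 : ξ i ω = s i := by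
            have := hωs
            rw [hA] at this
            simp only [Set.mem_iInter, Set.mem_preimage, Set.mem_singleton_iff,
              Finset.mem_range] at this
            exact this i hi
          have h2 : s₀ i = ξ i ω := by simp [hs₀, hi]
          rw [← h1, h2]
        · rw [(atoms_mem hs).2 i (by omega), (atoms_mem hs₀mem).2 i (by omega)]
      · intro h
        exact absurd hs₀mem h
    rw [hgω]
    norm_cast
    apply hF
    intro i hi
    simp [hs₀, hi]
  have hgint : Integrable g μ :=
    integrable_finset_sum _ (fun s hs => (integrable_const _).indicator (hAmeas s))
  have htoReal : ((1/2 : ℝ≥0∞)^n).toReal = (1/2:ℝ)^n := by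
    rw [ENNReal.toReal_pow]
    norm_num
  refine ⟨hgint.congr hae.symm, ?_⟩
  rw [integral_congr_ae hae, hg,
    integral_finset_sum _ (fun s hs => (integrable_const _).indicator (hAmeas s)),
    Finset.mul_sum]
  apply Finset.sum_congr rfl
  intro s hs
  rw [integral_indicator_const _ (hAmeas s), measureReal_def, hAmu s hs, smul_eq_mul, htoReal]

end RW7

section RW8

/-- the W functional -/
noncomputable def pW (k n : ℕ) (s : ℕ → ℤ) : ℤ :=
  pR s (pT k n s) * (pR s (pT k n s) + 1)
    - 2*(pX s (pT k n s) - pA s (pT k n s))*(pB s (pT k n s) - pX s (pT k n s))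

lemma pN_eq_pW (k n : ℕ) (s : ℕ → ℤ) :
    pN s (pT k n s) = 2 * (pT k n s : ℤ) - pW k n s := by
  rw [pN, pW]
  ring

lemma pW_congr {s s' : ℕ → ℤ} {k n : ℕ} (h : ∀ i < n, s i = s' i) :
    pW k n s = pW k n s' := by
  have ht := pT_congr (k := k) (n := n) h
  have hle := pT_le k n s
  rw [pW, pW, ← ht, pR_congr h hle, pX_congr h hle, pA_congr h hle, pB_congr h hle]

lemma pNT_congr {s s' : ℕ → ℤ} {k n : ℕ} (h : ∀ i < n, s i = s' i) :
    pN s (pT k n s) = pN s' (pT k n s') := by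
  rw [← pT_congr (k := k) (n := n) h, pN_congr h (pT_le k n s)]

lemma pW_nonneg (k n : ℕ) (s : ℕ → ℤ) : 0 ≤ pW k n s := by
  rw [pW]
  set t := pT k n s
  have h1 : pA s t ≤ pX s t := pA_le_pX s t
  have h2 : pX s t ≤ pB s t := pX_le_pB s t
  have hr : pR s t = (pX s t - pA s t) + (pB s t - pX s t) := by rw [pR]; ring
  rw [hr]
  nlinarith [sq_nonneg ((pX s t - pA s t) - (pB s t - pX s t))]

lemma pW_le {k n : ℕ} {s : ℕ → ℤ} (hg : ∀ i, s i = 1 ∨ s i = -1) :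
    pW k n s ≤ (k:ℤ) * (k+1) := by
  rw [pW]
  set t := pT k n s
  have h1 : pA s t ≤ pX s t := pA_le_pX s t
  have h2 : pX s t ≤ pB s t := pX_le_pB s t
  have h3 : pR s t ≤ (k:ℤ) := pR_le_k hg t le_rfl
  have h4 : 0 ≤ pR s t := pR_nonneg s t
  have hk4 : (0:ℤ) ≤ k := by positivity
  nlinarith

lemma pT_mono (k : ℕ) (s : ℕ → ℤ) : Monotone (fun n => pT k n s) := by
  apply monotone_nat_of_le_succ
  intro n
  by_cases hc : ∃ m ≤ n, pR s m = (k:ℤ)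
  · rw [(pT_hit hc).2.2]
  · push_neg at hc
    rw [(pT_miss hc).1, (pT_miss hc).2]
    omega

/-- for n past the hitting time, pT equals the hitting time -/
lemma pT_eq_hit {k n : ℕ} {s : ℕ → ℤ} (hne : {m | pR s m = (k:ℤ)}.Nonempty)
    (hn : sInf {m | pR s m = (k:ℤ)} ≤ n) :
    pT k n s = sInf {m | pR s m = (k:ℤ)} :=
  (pT_hit ⟨_, hn, Nat.sInf_mem hne⟩).1

/-- pT is dominated by the hitting time -/
lemma pT_le_hit {k n : ℕ} {s : ℕ → ℤ} (hne : {m | pR s m = (k:ℤ)}.Nonempty) :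
    pT k n s ≤ sInf {m | pR s m = (k:ℤ)} := by
  by_cases hn : sInf {m | pR s m = (k:ℤ)} ≤ n
  · rw [pT_eq_hit hne hn]
  · have := pT_le k n s
    omega

lemma pW_at_hit {k n : ℕ} {s : ℕ → ℤ} (hk : 1 ≤ k)
    (hne : {m | pR s m = (k:ℤ)}.Nonempty) (hn : sInf {m | pR s m = (k:ℤ)} ≤ n) :
    pW k n s = (k:ℤ) * (k+1) := by
  have h1 := pN_eq_pW k n s
  rw [pT_eq_hit hne hn, pN_at_hit hk hne] at h1
  omega

end RW8

open MeasureTheory ProbabilityTheory Filter Topology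

theorem expected_time_range_increase {Ω : Type*} [MeasurableSpace Ω]
    (μ : Measure Ω) [IsProbabilityMeasure μ]
    (ξ : ℕ → Ω → ℤ) (hmeas : ∀ i, Measurable (ξ i))
    (hindep : iIndepFun ξ μ)
    (hdist : ∀ k, μ {ω | ξ k ω = 1} = 1/2 ∧ μ {ω | ξ k ω = -1} = 1/2)
    (X : ℕ → Ω → ℤ) (hX : ∀ n ω, X n ω = ∑ k ∈ Finset.range n, ξ k ω)
    (R : ℕ → Ω → ℤ)
    (hR : ∀ n ω, R n ω
      = (Finset.range (n+1)).sup' Finset.nonempty_range_add_one (fun j => X j ω)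
        - (Finset.range (n+1)).inf' Finset.nonempty_range_add_one (fun j => X j ω))
    (S : ℕ → Ω → ℕ) (hS : ∀ k ω, S k ω = sInf {n | R n ω = (k : ℤ)})
    (k : ℕ) (hk : 1 ≤ k) :
    ∫ ω, (S k ω : ℝ) ∂μ = k * (k + 1) / 2 := by
  classical
  have hgood := ae_good μ ξ hmeas hdist
  -- identification of the given processes with the deterministic path functionals
  have hXp : ∀ n ω, X n ω = pX (fun i => ξ i ω) n := by
    intro n ω
    rw [hX]
    rfl
  have hRp : ∀ n ω, R n ω = pR (fun i => ξ i ω) n := by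
    intro n ω
    rw [hR, pR, pB, pA]
    congr 1
    · exact Finset.sup'_congr _ rfl (fun j _ => hXp j ω)
    · exact Finset.inf'_congr _ rfl (fun j _ => hXp j ω)
  have hSp : ∀ ω, S k ω = sInf {n | pR (fun i => ξ i ω) n = (k:ℤ)} := by
    intro ω
    rw [hS]
    congr 1
    ext n
    simp only [Set.mem_setOf_eq, hRp]
  -- bridge applications
  have bT : ∀ n, Integrable (fun ω => ((pT k n (fun i => ξ i ω) : ℤ) : ℝ)) μ ∧
      ∫ ω, ((pT k n (fun i => ξ i ω) : ℤ) : ℝ) ∂μ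
        = (1/2:ℝ)^n * ∑ s ∈ atoms n, ((pT k n s : ℤ) : ℝ) :=
    fun n => bridge μ ξ hmeas hindep hdist n (fun s => (pT k n s : ℤ))
      (fun s s' h => by simp only [pT_congr (k := k) (n := n) h])
  have bW : ∀ n, Integrable (fun ω => ((pW k n (fun i => ξ i ω) : ℤ) : ℝ)) μ ∧
      ∫ ω, ((pW k n (fun i => ξ i ω) : ℤ) : ℝ) ∂μ
        = (1/2:ℝ)^n * ∑ s ∈ atoms n, ((pW k n s : ℤ) : ℝ) :=
    fun n => bridge μ ξ hmeas hindep hdist n (pW k n) (fun s s' h => pW_congr h)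
  have bN : ∀ n, Integrable (fun ω =>
        ((pN (fun i => ξ i ω) (pT k n (fun i => ξ i ω)) : ℤ) : ℝ)) μ ∧
      ∫ ω, ((pN (fun i => ξ i ω) (pT k n (fun i => ξ i ω)) : ℤ) : ℝ) ∂μ
        = (1/2:ℝ)^n * ∑ s ∈ atoms n, ((pN s (pT k n s) : ℤ) : ℝ) :=
    fun n => bridge μ ξ hmeas hindep hdist n (fun s => pN s (pT k n s))
      (fun s s' h => pNT_congr h)
  -- E[M_{T ∧ n}] = 0
  have hNzero : ∀ n, ∫ ω, ((pN (fun i => ξ i ω) (pT k n (fun i => ξ i ω)) : ℤ) : ℝ) ∂μ = 0 := by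
    intro n
    rw [(bN n).2]
    have hsum : ∑ s ∈ atoms n, ((pN s (pT k n s) : ℤ) : ℝ) = 0 := by
      have h := key_sum k n
      have : ((∑ s ∈ atoms n, pN s (pT k n s) : ℤ) : ℝ) = 0 := by rw [h]; norm_num
      rwa [Int.cast_sum] at this
    rw [hsum, mul_zero]
  -- notation for the two integral sequences
  set a : ℕ → ℝ := fun n => ∫ ω, ((pT k n (fun i => ξ i ω) : ℤ) : ℝ) ∂μ with ha
  set b : ℕ → ℝ := fun n => ∫ ω, ((pW k n (fun i => ξ i ω) : ℤ) : ℝ) ∂μ with hb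
  -- 2 a n = b n
  have hab : ∀ n, 2 * a n = b n := by
    intro n
    have hptwise : (fun ω => ((pN (fun i => ξ i ω) (pT k n (fun i => ξ i ω)) : ℤ) : ℝ))
        = fun ω => 2 * ((pT k n (fun i => ξ i ω) : ℤ) : ℝ)
            - ((pW k n (fun i => ξ i ω) : ℤ) : ℝ) := by
      funext ω
      rw [pN_eq_pW]
      push_cast
      ring
    have h0 := hNzero n
    rw [hptwise, integral_sub (((bT n).1).const_mul 2) (bW n).1, integral_const_mul] at h0
    rw [ha, hb]
    simp only []
    linarith
  -- integral bounds
  have hbLe : ∀ n, b n ≤ (k:ℝ) * (k+1) := by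
    intro n
    rw [hb]
    calc ∫ ω, ((pW k n (fun i => ξ i ω) : ℤ) : ℝ) ∂μ
        ≤ ∫ _ω, (k:ℝ) * (k+1) ∂μ := by
          apply integral_mono_ae (bW n).1 (integrable_const _)
          filter_upwards [hgood] with ω hω
          exact_mod_cast pW_le (fun i => hω i)
      _ = (k:ℝ) * (k+1) := by simp
  have haLe : ∀ n, a n ≤ (k:ℝ) * (k+1) / 2 := by
    intro n
    have := hab n
    have := hbLe n
    linarith
  -- measurability of the range process
  have hXmeas : ∀ n, Measurable (fun ω => pX (fun i => ξ i ω) n) := by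
    intro n
    exact Finset.measurable_sum _ (fun i _ => hmeas i)
  have hBmeas : ∀ n, Measurable (fun ω => pB (fun i => ξ i ω) n) := by
    intro n
    induction n with
    | zero => simp only [pB_zero]; exact measurable_const
    | succ n ih =>
      simp only [pB_succ]
      exact ih.max (hXmeas (n+1))
  have hAmeas' : ∀ n, Measurable (fun ω => pA (fun i => ξ i ω) n) := by
    intro n
    induction n with
    | zero => simp only [pA_zero]; exact measurable_const
    | succ n ih =>
      simp only [pA_succ]
      exact ih.min (hXmeas (n+1))
  have hRmeas : ∀ n, Measurable (fun ω => pR (fun i => ξ i ω) n) := by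
    intro n
    simp only [pR]
    exact (hBmeas n).sub (hAmeas' n)
  -- the event of never reaching range k is null
  set Binf : Set Ω := ⋂ m, {ω | pR (fun i => ξ i ω) m ≠ (k:ℤ)} with hBinf
  have hBinfMeas : MeasurableSet Binf :=
    MeasurableSet.iInter (fun m => ((hRmeas m) (measurableSet_singleton _)).compl)
  have hBinfBound : ∀ n : ℕ, (n:ℝ) * (μ Binf).toReal ≤ (k:ℝ) * (k+1) / 2 := by
    intro n
    have hptle : ∀ ω, Set.indicator Binf (fun _ => (n:ℝ)) ω
        ≤ ((pT k n (fun i => ξ i ω) : ℤ) : ℝ) := by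
      intro ω
      by_cases hω : ω ∈ Binf
      · rw [Set.indicator_of_mem hω]
        have hmiss : ∀ m ≤ n, pR (fun i => ξ i ω) m ≠ (k:ℤ) := by
          intro m _
          exact Set.mem_iInter.mp hω m
        rw [(pT_miss hmiss).1]
        push_cast
        exact le_rfl
      · rw [Set.indicator_of_notMem hω]
        positivity
    have h1 : ∫ ω, Set.indicator Binf (fun _ => (n:ℝ)) ω ∂μ ≤ a n := by
      rw [ha]
      exact integral_mono ((integrable_const _).indicator hBinfMeas) (bT n).1 hptle
    rw [integral_indicator_const _ hBinfMeas, smul_eq_mul, measureReal_def] at h1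
    have := haLe n
    linarith
  have hBinfNull : μ Binf = 0 := by
    have htR : (μ Binf).toReal = 0 := by
      by_contra hne
      have hpos : 0 < (μ Binf).toReal := lt_of_le_of_ne ENNReal.toReal_nonneg (Ne.symm hne)
      obtain ⟨n, hn⟩ := exists_nat_gt (((k:ℝ) * (k+1) / 2) / (μ Binf).toReal)
      have := hBinfBound n
      rw [div_lt_iff₀ hpos] at hn
      linarith
    exact ((ENNReal.toReal_eq_zero_iff _).mp htR).resolve_right (measure_ne_top μ _)
  -- a.e. the walk reaches range k
  have hhit : ∀ᵐ ω ∂μ, {m | pR (fun i => ξ i ω) m = (k:ℤ)}.Nonempty := by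
    have hsub : {ω | ¬ {m | pR (fun i => ξ i ω) m = (k:ℤ)}.Nonempty} ⊆ Binf := by
      intro ω hω
      rw [Set.mem_setOf_eq, Set.not_nonempty_iff_eq_empty] at hω
      rw [hBinf, Set.mem_iInter]
      intro m
      intro hc
      have : m ∈ {m | pR (fun i => ξ i ω) m = (k:ℤ)} := hc
      rw [hω] at this
      exact this
    exact measure_mono_null hsub hBinfNull
  -- dominated convergence : b n → k(k+1)
  have hbLim : Tendsto b atTop (𝓝 ((k:ℝ) * (k+1))) := by
    have hconst : ∫ _ω, (k:ℝ) * ((k:ℝ)+1) ∂μ = (k:ℝ) * (k+1) := by simp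
    rw [← hconst]
    rw [hb]
    apply tendsto_integral_of_dominated_convergence (bound := fun _ => (k:ℝ) * (k+1))
    · exact fun n => (bW n).1.aestronglyMeasurable
    · exact integrable_const _
    · intro n
      filter_upwards [hgood] with ω hω
      rw [Real.norm_eq_abs, abs_of_nonneg (by exact_mod_cast pW_nonneg k n _)]
      exact_mod_cast pW_le (fun i => hω i)
    · filter_upwards [hhit] with ω hω
      apply Tendsto.congr' (f₁ := fun _ => (k:ℝ) * ((k:ℝ)+1))
      · rw [Filter.EventuallyEq, eventually_atTop]
        refine ⟨sInf {m | pR (fun i => ξ i ω) m = (k:ℤ)}, fun n hn => ?_⟩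
        rw [pW_at_hit hk hω hn]
        push_cast
        ring
      · exact tendsto_const_nhds
  -- hence a n → k(k+1)/2
  have haLim : Tendsto a atTop (𝓝 ((k:ℝ) * (k+1) / 2)) := by
    have h2 : Tendsto (fun n => b n / 2) atTop (𝓝 ((k:ℝ) * (k+1) / 2)) :=
      hbLim.div_const 2
    apply h2.congr
    intro n
    rw [← hab n]
    ring
  -- measurability of the hitting time
  have hSmeas : Measurable (S k) := by
    apply measurable_to_countable'
    intro j
    by_cases hj : j = 0
    · subst hj
      have hset : S k ⁻¹' {0} = {ω | pR (fun i => ξ i ω) 0 = (k:ℤ)} ∪ Binf := by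
        ext ω
        simp only [Set.mem_preimage, Set.mem_singleton_iff, hSp ω, Set.mem_union,
          hBinf, Set.mem_iInter, Set.mem_setOf_eq]
        rw [Nat.sInf_eq_zero]
        constructor
        · rintro (h0 | hemp)
          · exact Or.inl h0
          · refine Or.inr (fun m hc => ?_)
            have : m ∈ {n | pR (fun i => ξ i ω) n = (k:ℤ)} := hc
            rw [hemp] at this
            exact this
        · rintro (h0 | hall)
          · exact Or.inl h0
          · exact Or.inr (Set.eq_empty_iff_forall_notMem.mpr (fun m hm => hall m hm))
      rw [hset]
      exact ((hRmeas 0) (measurableSet_singleton _)).union hBinfMeas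
    · have hset : S k ⁻¹' {j} = {ω | pR (fun i => ξ i ω) j = (k:ℤ)}
          ∩ ⋂ (i : ℕ), ⋂ (_ : i < j), {ω | pR (fun i' => ξ i' ω) i ≠ (k:ℤ)} := by
        ext ω
        simp only [Set.mem_preimage, Set.mem_singleton_iff, hSp ω, Set.mem_inter_iff,
          Set.mem_iInter, Set.mem_setOf_eq]
        constructor
        · intro hj'
          have hne : {n | pR (fun i => ξ i ω) n = (k:ℤ)}.Nonempty := by
            by_contra hc
            rw [Set.not_nonempty_iff_eq_empty] at hc
            rw [hc, Nat.sInf_empty] at hj'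
            exact hj hj'.symm
          constructor
          · have := Nat.sInf_mem hne
            rwa [hj'] at this
          · intro i hi
            rw [← hj'] at hi
            exact Nat.notMem_of_lt_sInf hi
        · rintro ⟨hmem, hlt⟩
          apply le_antisymm (Nat.sInf_le hmem)
          by_contra hc
          push_neg at hc
          have := Nat.sInf_mem (⟨j, hmem⟩ : {n | pR (fun i => ξ i ω) n = (k:ℤ)}.Nonempty)
          exact hlt _ hc this
      rw [hset]
      exact ((hRmeas j) (measurableSet_singleton _)).inter
        (MeasurableSet.iInter (fun i => MeasurableSet.iInter
          (fun _ => ((hRmeas i) (measurableSet_singleton _)).compl)))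
  -- a.e. convergence of the truncated stopping times to S k
  have hTtendsto : ∀ᵐ ω ∂μ, Tendsto (fun n => ((pT k n (fun i => ξ i ω) : ℤ) : ℝ))
      atTop (𝓝 ((S k ω : ℝ))) := by
    filter_upwards [hhit] with ω hω
    apply Tendsto.congr' (f₁ := fun _ => ((S k ω : ℕ) : ℝ))
    · rw [Filter.EventuallyEq, eventually_atTop]
      refine ⟨S k ω, fun n hn => ?_⟩
      rw [hSp ω] at hn ⊢
      rw [pT_eq_hit hω hn]
      push_cast
      ring
    · exact tendsto_const_nhds
  -- integrability of S k
  have hSnonneg : ∀ ω, (0:ℝ) ≤ (S k ω : ℝ) := fun ω => by positivity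
  have hFmeas : Measurable (fun ω => (S k ω : ℝ)) := measurable_from_nat.comp hSmeas
  have hlin : ∫⁻ ω, ENNReal.ofReal ((S k ω : ℝ)) ∂μ = ⨆ n, ENNReal.ofReal (a n) := by
    have hae : (fun ω => ENNReal.ofReal ((S k ω : ℝ)))
        =ᵐ[μ] fun ω => ⨆ n, ENNReal.ofReal (((pT k n (fun i => ξ i ω) : ℤ) : ℝ)) := by
      filter_upwards [hhit] with ω hω
      apply le_antisymm
      · apply le_iSup_of_le (sInf {m | pR (fun i => ξ i ω) m = (k:ℤ)})
        apply ENNReal.ofReal_le_ofReal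
        rw [pT_eq_hit hω le_rfl, hSp ω]
        push_cast
        exact le_rfl
      · apply iSup_le
        intro n
        apply ENNReal.ofReal_le_ofReal
        have h1 : pT k n (fun i => ξ i ω) ≤ S k ω := by
          rw [hSp ω]
          exact pT_le_hit hω
        push_cast
        exact_mod_cast h1
    rw [lintegral_congr_ae hae, lintegral_iSup']
    · congr 1
      funext n
      rw [← ofReal_integral_eq_lintegral_ofReal (bT n).1
        (Filter.Eventually.of_forall (fun ω => by positivity))]
    · exact fun n => ENNReal.measurable_ofReal.comp_aemeasurable (bT n).1.aemeasurable
    · apply Filter.Eventually.of_forall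
      intro ω
      intro m n hmn
      apply ENNReal.ofReal_le_ofReal
      have := pT_mono k (fun i => ξ i ω) hmn
      push_cast
      exact_mod_cast this
  have hFint : Integrable (fun ω => (S k ω : ℝ)) μ := by
    refine ⟨hFmeas.aestronglyMeasurable, ?_⟩
    rw [hasFiniteIntegral_iff_ofReal (Filter.Eventually.of_forall hSnonneg), hlin]
    apply lt_of_le_of_lt (iSup_le (fun n => ENNReal.ofReal_le_ofReal (haLe n)))
    exact ENNReal.ofReal_lt_top
  -- monotone convergence
  have hfinal : Tendsto a atTop (𝓝 (∫ ω, (S k ω : ℝ) ∂μ)) := by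
    apply integral_tendsto_of_tendsto_of_monotone (fun n => (bT n).1) hFint
    · apply Filter.Eventually.of_forall
      intro ω m n hmn
      have := pT_mono k (fun i => ξ i ω) hmn
      push_cast
      exact_mod_cast this
    · exact hTtendsto
  have := tendsto_nhds_unique hfinal haLim
  rw [this]
end

section
/- Let X be the once-reinforced random walk on ℤ with parameter c > 0, with M_n = max_{k ≤ n} X_k and m_n = min_{k ≤ n} X_k. Then the process N_n = X_n - ((1-c)/(1+c)) (Σ_{k<n} 1_{X_k = M_k} - Σ_{k<n} 1_{X_k = m_k}) is a martingale. -/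
open MeasureTheory ProbabilityTheory

private lemma measurable_finset_sup'_int {δ : Type*} [MeasurableSpace δ] {ι : Type*}
    {s : Finset ι} (hs : s.Nonempty) {f : ι → δ → ℤ} (hf : ∀ i ∈ s, Measurable (f i)) :
    Measurable fun x => s.sup' hs fun i => f i x := by
  have h : Measurable (s.sup' hs f) :=
    Finset.sup'_induction hs _ (fun a ha b hb => ha.sup hb) hf
  have he : (fun x => s.sup' hs fun i => f i x) = s.sup' hs f := by
    ext x; simp [Finset.sup'_apply]
  rw [he]; exact h

private lemma measurable_finset_inf'_int {δ : Type*} [MeasurableSpace δ] {ι : Type*}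
    {s : Finset ι} (hs : s.Nonempty) {f : ι → δ → ℤ} (hf : ∀ i ∈ s, Measurable (f i)) :
    Measurable fun x => s.inf' hs fun i => f i x := by
  have h : Measurable (s.inf' hs f) :=
    Finset.inf'_induction hs _ (fun a ha b hb => ha.inf hb) hf
  have he : (fun x => s.inf' hs fun i => f i x) = s.inf' hs f := by
    ext x; simp [Finset.inf'_apply]
  rw [he]; exact h

private lemma integrable_of_bdd {Ω : Type*} [MeasurableSpace Ω] {μ : Measure Ω}
    [IsFiniteMeasure μ] {f : Ω → ℝ} (hf : AEStronglyMeasurable f μ) {C : ℝ}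
    (h : ∀ ω, |f ω| ≤ C) : Integrable f μ :=
  (integrable_const C).mono' hf (ae_of_all _ fun ω => by simpa using h ω)

/-- For the once-reinforced random walk `X` on `ℤ` with parameter `c > 0`
(characterized by its step distribution conditional on its past), the process
`N_n = X_n - ((1-c)/(1+c)) (Σ_{k<n} 1_{X_k = M_k} - Σ_{k<n} 1_{X_k = m_k})`
is a martingale with respect to the natural filtration of `X`. -/
theorem orrw_martingale {Ω : Type*} [m0 : MeasurableSpace Ω]
    (μ : Measure Ω) [IsProbabilityMeasure μ]
    (c : ℝ) (hc : 0 < c)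
    (X : ℕ → Ω → ℤ) (hmeas : ∀ n, Measurable (X n))
    (hX0 : ∀ ω, X 0 ω = 0)
    (hstep : ∀ n ω, X (n+1) ω = X n ω + 1 ∨ X (n+1) ω = X n ω - 1)
    (M : ℕ → Ω → ℤ)
    (hM : ∀ n ω, M n ω = (Finset.range (n+1)).sup' Finset.nonempty_range_add_one
      (fun k => X k ω))
    (m : ℕ → Ω → ℤ)
    (hm : ∀ n ω, m n ω = (Finset.range (n+1)).inf' Finset.nonempty_range_add_one
      (fun k => X k ω))
    (ℱ : Filtration ℕ m0)
    (hℱ : ∀ n, ℱ n = ⨆ k ∈ Set.Iic n, MeasurableSpace.comap (X k) inferInstance)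
    (hcond : ∀ n,
      (μ[Set.indicator {ω | X (n+1) ω = X n ω + 1} (fun _ => (1 : ℝ)) | ℱ n])
        =ᵐ[μ] fun ω =>
          if X n ω = M n ω ∧ X n ω = m n ω then 1/2
          else if X n ω = M n ω then 1/(1+c)
          else if X n ω = m n ω then c/(1+c)
          else 1/2) :
    Martingale
      (fun n ω => (X n ω : ℝ)
        - (1 - c)/(1 + c) *
          ((∑ k ∈ Finset.range n, if X k ω = M k ω then (1:ℝ) else 0)
            - ∑ k ∈ Finset.range n, if X k ω = m k ω then (1:ℝ) else 0))
      ℱ μ := by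
  have hc1 : (1:ℝ) + c ≠ 0 := by positivity
  set F : ℕ → Ω → ℝ := fun n ω => (X n ω : ℝ)
        - (1 - c)/(1 + c) *
          ((∑ k ∈ Finset.range n, if X k ω = M k ω then (1:ℝ) else 0)
            - ∑ k ∈ Finset.range n, if X k ω = m k ω then (1:ℝ) else 0) with hFdef
  -- measurability of X k w.r.t. ℱ n for k ≤ n
  have hXF : ∀ {k n : ℕ}, k ≤ n → Measurable[ℱ n] (X k) := by
    intro k n hk
    rw [hℱ n, measurable_iff_comap_le]
    exact le_iSup₂ (f := fun k (_ : k ∈ Set.Iic n) =>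
      MeasurableSpace.comap (X k) inferInstance) k hk
  have hMF : ∀ {k n : ℕ}, k ≤ n → Measurable[ℱ n] (M k) := by
    intro k n hk
    have he : (fun ω => (Finset.range (k+1)).sup' Finset.nonempty_range_add_one
        fun j => X j ω) = M k := funext fun ω => (hM k ω).symm
    rw [← he]
    exact @measurable_finset_sup'_int Ω (ℱ n) ℕ _ Finset.nonempty_range_add_one X
      fun j hj => hXF ((Finset.mem_range_succ_iff.mp hj).trans hk)
  have hmF : ∀ {k n : ℕ}, k ≤ n → Measurable[ℱ n] (m k) := by
    intro k n hk
    have he : (fun ω => (Finset.range (k+1)).inf' Finset.nonempty_range_add_one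
        fun j => X j ω) = m k := funext fun ω => (hm k ω).symm
    rw [← he]
    exact @measurable_finset_inf'_int Ω (ℱ n) ℕ _ Finset.nonempty_range_add_one X
      fun j hj => hXF ((Finset.mem_range_succ_iff.mp hj).trans hk)
  -- strong measurability of F n w.r.t. ℱ n
  have hFmeas : ∀ n, StronglyMeasurable[ℱ n] (F n) := by
    intro n
    apply Measurable.stronglyMeasurable
    apply Measurable.sub
    · exact (measurable_of_countable _).comp (hXF le_rfl)
    · apply Measurable.const_mul
      apply Measurable.sub <;>
        refine Finset.measurable_sum _ fun k hk => ?_ <;>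
          rw [Finset.mem_range] at hk
      · exact Measurable.ite (measurableSet_eq_fun (hXF hk.le) (hMF hk.le))
          measurable_const measurable_const
      · exact Measurable.ite (measurableSet_eq_fun (hXF hk.le) (hmF hk.le))
          measurable_const measurable_const
  -- bound on |X n|
  have hXbd : ∀ n ω, |X n ω| ≤ (n : ℤ) := by
    intro n
    induction n with
    | zero => intro ω; simp [hX0]
    | succ n ih =>
      intro ω
      have := ih ω
      rw [abs_le] at this ⊢
      rcases hstep n ω with h | h <;> rw [h] <;> push_cast <;> omega
  -- bounds on sums of indicators
  have hsumbd : ∀ (n : ℕ) (g : ℕ → Ω → ℤ) (ω : Ω),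
      0 ≤ (∑ k ∈ Finset.range n, if X k ω = g k ω then (1:ℝ) else 0) ∧
      (∑ k ∈ Finset.range n, if X k ω = g k ω then (1:ℝ) else 0) ≤ n := by
    intro n g ω
    constructor
    · exact Finset.sum_nonneg fun k _ => by positivity
    · calc (∑ k ∈ Finset.range n, if X k ω = g k ω then (1:ℝ) else 0)
          ≤ ∑ k ∈ Finset.range n, (1:ℝ) :=
            Finset.sum_le_sum fun k _ => by split <;> norm_num
        _ = n := by simp
  -- integrability
  have hFint : ∀ n, Integrable (F n) μ := by
    intro n
    refine integrable_of_bdd (((hFmeas n).mono (ℱ.le n)).aestronglyMeasurable)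
      (C := (n : ℝ) + |(1 - c)/(1 + c)| * n) fun ω => ?_
    have h1 : |(X n ω : ℝ)| ≤ (n : ℝ) := by
      have := hXbd n ω
      rw [abs_le] at this ⊢
      constructor <;> push_cast <;> [exact_mod_cast this.1; exact_mod_cast this.2]
    obtain ⟨h2a, h2b⟩ := hsumbd n M ω
    obtain ⟨h3a, h3b⟩ := hsumbd n m ω
    have h4 : |(∑ k ∈ Finset.range n, if X k ω = M k ω then (1:ℝ) else 0)
        - ∑ k ∈ Finset.range n, if X k ω = m k ω then (1:ℝ) else 0| ≤ n := by
      rw [abs_le]; constructor <;> linarith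
    calc |F n ω| ≤ |(X n ω : ℝ)| + |(1 - c)/(1 + c) *
          ((∑ k ∈ Finset.range n, if X k ω = M k ω then (1:ℝ) else 0)
            - ∑ k ∈ Finset.range n, if X k ω = m k ω then (1:ℝ) else 0)| :=
        abs_sub _ _
      _ ≤ (n : ℝ) + |(1 - c)/(1 + c)| * n := by
        rw [abs_mul]
        gcongr
  -- the martingale property
  refine martingale_nat (fun n => hFmeas n) hFint fun n => ?_
  set I : Ω → ℝ := Set.indicator {ω | X (n+1) ω = X n ω + 1} (fun _ => (1:ℝ)) with hIdef
  set A : Ω → ℝ := fun ω => F n ω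
      - ((1 - c)/(1 + c) * ((if X n ω = M n ω then (1:ℝ) else 0)
        - if X n ω = m n ω then (1:ℝ) else 0) + 1) with hAdef
  -- decomposition
  have hdec : F (n+1) = A + (2:ℝ) • I := by
    funext ω
    simp only [Pi.add_apply, Pi.smul_apply, smul_eq_mul, hAdef, hIdef, hFdef,
      Finset.sum_range_succ]
    rcases hstep n ω with h | h
    · rw [Set.indicator_of_mem (by exact h : ω ∈ {ω | X (n+1) ω = X n ω + 1})]
      rw [h]; push_cast; ring
    · rw [Set.indicator_of_notMem (by simp only [Set.mem_setOf_eq, h]; omega)]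
      rw [h]; push_cast; ring
  -- integrability of pieces
  have hIint : Integrable I μ := by
    refine integrable_of_bdd ?_ (C := 1) fun ω => ?_
    · refine (Measurable.indicator measurable_const ?_).aestronglyMeasurable
      exact measurableSet_eq_fun (hmeas (n+1)) ((hmeas n).add measurable_const)
    · rw [hIdef]
      by_cases h : ω ∈ {ω | X (n+1) ω = X n ω + 1} <;>
        simp [Set.indicator_of_mem, Set.indicator_of_notMem, h]
  have hAmeas : StronglyMeasurable[ℱ n] A := by
    apply Measurable.stronglyMeasurable
    apply Measurable.sub (hFmeas n).measurable
    apply Measurable.add _ measurable_const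
    apply Measurable.const_mul
    exact Measurable.sub
      (Measurable.ite (measurableSet_eq_fun (hXF le_rfl) (hMF le_rfl))
        measurable_const measurable_const)
      (Measurable.ite (measurableSet_eq_fun (hXF le_rfl) (hmF le_rfl))
        measurable_const measurable_const)
  have hAint : Integrable A μ := by
    refine Integrable.sub (hFint n) ?_
    refine Integrable.add ?_ (integrable_const 1)
    refine Integrable.const_mul ?_ _
    refine Integrable.sub ?_ ?_ <;>
      refine integrable_of_bdd ?_ (C := 1) fun ω => by split <;> norm_num
    · exact (Measurable.ite
        (measurableSet_eq_fun ((hXF le_rfl).mono (ℱ.le n) le_rfl)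
          ((hMF le_rfl).mono (ℱ.le n) le_rfl))
        measurable_const measurable_const).aestronglyMeasurable
    · exact (Measurable.ite
        (measurableSet_eq_fun ((hXF le_rfl).mono (ℱ.le n) le_rfl)
          ((hmF le_rfl).mono (ℱ.le n) le_rfl))
        measurable_const measurable_const).aestronglyMeasurable
  -- conditional expectation computation
  have h1 : μ[F (n+1) | ℱ n] =ᵐ[μ] μ[A | ℱ n] + μ[(2:ℝ) • I | ℱ n] := by
    rw [hdec]; exact condExp_add hAint (hIint.smul (2:ℝ)) _
  have h2 : μ[A | ℱ n] = A := condExp_of_stronglyMeasurable (ℱ.le n) hAmeas hAint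
  have h3 : μ[(2:ℝ) • I | ℱ n] =ᵐ[μ] (2:ℝ) • μ[I | ℱ n] := condExp_smul (2:ℝ) I _
  have h4 : μ[F (n+1) | ℱ n] =ᵐ[μ] fun ω => A ω + 2 * (μ[I | ℱ n]) ω := by
    filter_upwards [h1, h3] with ω hω1 hω3
    rw [hω1]; simp only [Pi.add_apply, h2, hω3, Pi.smul_apply, smul_eq_mul]
  have h5 : μ[F (n+1) | ℱ n] =ᵐ[μ] fun ω => A ω + 2 *
      (if X n ω = M n ω ∧ X n ω = m n ω then 1/2
          else if X n ω = M n ω then 1/(1+c)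
          else if X n ω = m n ω then c/(1+c)
          else 1/2) := by
    filter_upwards [h4, hcond n] with ω hω4 hωc
    rw [hω4, hωc]
  refine Filter.EventuallyEq.trans ?_ h5.symm
  apply Filter.EventuallyEq.of_eq
  funext ω
  simp only [hAdef]
  split_ifs <;> first | tauto | (field_simp; try ring)
end

section
/- Let X be the once-reinforced random walk on ℤ with parameter c > 0, M_n and m_n its running max and min. Then N_n = X_n^2 - n - 2((1-c)/(1+c)) Σ_{k<n} |X_k| 1_{X_k ∈ {m_k, M_k}} is a mean-zero martingale. -/
open MeasureTheory ProbabilityTheory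

private lemma aux_range_sup_meas {Ω : Type*} [mΩ : MeasurableSpace Ω]
    (f : ℕ → Ω → ℤ) {n : ℕ} (hf : ∀ k ≤ n, Measurable (f k)) :
    Measurable (fun ω => (Finset.range (n+1)).sup' Finset.nonempty_range_add_one
      fun k => f k ω) :=
  Finset.measurable_range_sup'' hf

private lemma aux_range_inf_meas {Ω : Type*} [mΩ : MeasurableSpace Ω]
    (f : ℕ → Ω → ℤ) {n : ℕ} (hf : ∀ k ≤ n, Measurable (f k)) :
    Measurable (fun ω => (Finset.range (n+1)).inf' Finset.nonempty_range_add_one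
      fun k => f k ω) :=
  Finset.measurable_range_sup'' (α := ℤᵒᵈ) hf


/-- For the once-reinforced random walk `X` on `ℤ` with parameter `c > 0`
(characterized by its step distribution conditional on its past), the process
`N_n = X_n^2 - n - 2((1-c)/(1+c)) Σ_{k<n} |X_k| 1_{X_k ∈ {m_k, M_k}}`
is a mean-zero martingale with respect to the natural filtration of `X`. -/
theorem orrw_square_martingale {Ω : Type*} [m0 : MeasurableSpace Ω]
    (μ : Measure Ω) [IsProbabilityMeasure μ]
    (c : ℝ) (hc : 0 < c)
    (X : ℕ → Ω → ℤ) (hmeas : ∀ n, Measurable (X n))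
    (hX0 : ∀ ω, X 0 ω = 0)
    (hstep : ∀ n ω, X (n+1) ω = X n ω + 1 ∨ X (n+1) ω = X n ω - 1)
    (M : ℕ → Ω → ℤ)
    (hM : ∀ n ω, M n ω = (Finset.range (n+1)).sup' Finset.nonempty_range_add_one
      (fun k => X k ω))
    (m : ℕ → Ω → ℤ)
    (hm : ∀ n ω, m n ω = (Finset.range (n+1)).inf' Finset.nonempty_range_add_one
      (fun k => X k ω))
    (ℱ : Filtration ℕ m0)
    (hℱ : ∀ n, ℱ n = ⨆ k ∈ Set.Iic n, MeasurableSpace.comap (X k) inferInstance)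
    (hcond : ∀ n,
      (μ[Set.indicator {ω | X (n+1) ω = X n ω + 1} (fun _ => (1 : ℝ)) | ℱ n])
        =ᵐ[μ] fun ω =>
          if X n ω = M n ω ∧ X n ω = m n ω then 1/2
          else if X n ω = M n ω then 1/(1+c)
          else if X n ω = m n ω then c/(1+c)
          else 1/2) :
    Martingale
      (fun n ω => ((X n ω : ℝ))^2 - n
        - 2 * (1 - c)/(1 + c) *
          ∑ k ∈ Finset.range n,
            |(X k ω : ℝ)| * (if X k ω = m k ω ∨ X k ω = M k ω then (1:ℝ) else 0))
      ℱ μ ∧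
    ∀ n, ∫ ω, (((X n ω : ℝ))^2 - n
        - 2 * (1 - c)/(1 + c) *
          ∑ k ∈ Finset.range n,
            |(X k ω : ℝ)| * (if X k ω = m k ω ∨ X k ω = M k ω then (1:ℝ) else 0)) ∂μ = 0 := by
  classical
  have hc1 : (0:ℝ) < 1 + c := by linarith
  have hc1' : (1:ℝ) + c ≠ 0 := ne_of_gt hc1
  set κ : ℝ := 2 * (1 - c)/(1 + c) with hκ
  set g : ℕ → Ω → ℝ := fun k ω =>
    |(X k ω : ℝ)| * (if X k ω = m k ω ∨ X k ω = M k ω then (1:ℝ) else 0) with hg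
  set f : ℕ → Ω → ℝ := fun n ω => ((X n ω : ℝ))^2 - n - κ * ∑ k ∈ Finset.range n, g k ω
    with hf
  -- basic order facts
  have hXM : ∀ n ω, X n ω ≤ M n ω := fun n ω => by
    rw [hM]
    exact Finset.le_sup' (fun k => X k ω) (Finset.self_mem_range_succ n)
  have hmX : ∀ n ω, m n ω ≤ X n ω := fun n ω => by
    rw [hm]
    exact Finset.inf'_le (fun k => X k ω) (Finset.self_mem_range_succ n)
  have hM0 : ∀ n ω, 0 ≤ M n ω := fun n ω => by
    rw [hM]
    calc (0:ℤ) = X 0 ω := (hX0 ω).symm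
    _ ≤ _ := Finset.le_sup' (fun k => X k ω) (Finset.mem_range.2 (Nat.succ_pos n))
  have hm0 : ∀ n ω, m n ω ≤ 0 := fun n ω => by
    rw [hm]
    calc (Finset.range (n+1)).inf' Finset.nonempty_range_add_one (fun k => X k ω)
        ≤ X 0 ω := Finset.inf'_le (fun k => X k ω) (Finset.mem_range.2 (Nat.succ_pos n))
    _ = 0 := hX0 ω
  -- bound on |X n|
  have hXb : ∀ n ω, |X n ω| ≤ (n:ℤ) := by
    intro n
    induction n with
    | zero => intro ω; simp [hX0 ω]
    | succ n ih =>
      intro ω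
      have := ih ω
      rcases hstep n ω with h | h <;> rw [h] <;> push_cast <;>
        rw [abs_le] at * <;> omega
  have hXbR : ∀ n ω, |(X n ω : ℝ)| ≤ (n:ℝ) := fun n ω => by
    rw [← Int.cast_abs]
    exact_mod_cast hXb n ω
  have hgb : ∀ k ω, |g k ω| ≤ (k:ℝ) := fun k ω => by
    show abs (|(X k ω : ℝ)| * (if X k ω = m k ω ∨ X k ω = M k ω then (1:ℝ) else 0)) ≤ (k:ℝ)
    by_cases h : X k ω = m k ω ∨ X k ω = M k ω
    · rw [if_pos h, mul_one, abs_abs]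
      exact hXbR k ω
    · rw [if_neg h, mul_zero, abs_zero]
      positivity
  -- measurability wrt ℱ n
  have hXF : ∀ k n, k ≤ n → Measurable[ℱ n] (X k) := by
    intro k n hk
    rw [measurable_iff_comap_le, hℱ n]
    exact le_iSup₂ (f := fun k (_ : k ∈ Set.Iic n) =>
      MeasurableSpace.comap (X k) inferInstance) k hk
  have hMF : ∀ k n, k ≤ n → Measurable[ℱ n] (M k) := by
    intro k n hk
    have : (M k) = fun ω => (Finset.range (k+1)).sup' Finset.nonempty_range_add_one
        fun j => X j ω := funext fun ω => hM k ω
    rw [this]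
    exact aux_range_sup_meas (mΩ := ℱ n) X fun j hj => hXF j n (hj.trans hk)
  have hmF : ∀ k n, k ≤ n → Measurable[ℱ n] (m k) := by
    intro k n hk
    have : (m k) = fun ω => (Finset.range (k+1)).inf' Finset.nonempty_range_add_one
        fun j => X j ω := funext fun ω => hm k ω
    rw [this]
    exact aux_range_inf_meas (mΩ := ℱ n) X fun j hj => hXF j n (hj.trans hk)
  have hgF : ∀ k n, k ≤ n → Measurable[ℱ n] (g k) := by
    intro k n hk
    rw [hg]
    have h1 : Measurable[ℱ n] fun ω => |(X k ω : ℝ)| :=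
      ((measurable_of_countable fun x : ℤ => |(x:ℝ)|).comp (hXF k n hk))
    have h2 : MeasurableSet[ℱ n] {ω | X k ω = m k ω ∨ X k ω = M k ω} := by
      have : {ω | X k ω = m k ω ∨ X k ω = M k ω}
          = {ω | X k ω = m k ω} ∪ {ω | X k ω = M k ω} := rfl
      rw [this]
      exact (measurableSet_eq_fun (hXF k n hk) (hmF k n hk)).union
        (measurableSet_eq_fun (hXF k n hk) (hMF k n hk))
    exact h1.mul (Measurable.ite h2 measurable_const measurable_const)
  have hfF : ∀ n, Measurable[ℱ n] (f n) := by
    intro n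
    rw [hf]
    have h1 : Measurable[ℱ n] fun ω => ((X n ω : ℝ))^2 :=
      (measurable_of_countable fun x : ℤ => ((x:ℝ))^2).comp (hXF n n le_rfl)
    have h2 : Measurable[ℱ n] fun ω => ∑ k ∈ Finset.range n, g k ω :=
      Finset.measurable_sum _ fun k hk => hgF k n (Finset.mem_range.1 hk).le
    exact (h1.sub measurable_const).sub (h2.const_mul κ)
  -- integrability helper
  have hInt : ∀ (h : Ω → ℝ) (C : ℝ), Measurable h → (∀ ω, |h ω| ≤ C) → Integrable h μ := by
    intro h C hmh hb
    exact ⟨hmh.aestronglyMeasurable, HasFiniteIntegral.of_bounded (C := C)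
      (ae_of_all _ fun ω => by simpa [Real.norm_eq_abs] using hb ω)⟩
  have hfmeas : ∀ n, Measurable (f n) := fun n => (hfF n).mono (ℱ.le n) le_rfl
  have hgmeas : ∀ k, Measurable (g k) := fun k => (hgF k k le_rfl).mono (ℱ.le k) le_rfl
  have hfb : ∀ n ω, |f n ω| ≤ (n:ℝ)^2 + n + |κ| * (n * n) := by
    intro n ω
    have h1 : |((X n ω : ℝ))^2| ≤ (n:ℝ)^2 := by
      rw [abs_pow]
      exact pow_le_pow_left₀ (abs_nonneg _) (hXbR n ω) 2
    have h2 : |∑ k ∈ Finset.range n, g k ω| ≤ (n:ℝ) * n := by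
      calc |∑ k ∈ Finset.range n, g k ω| ≤ ∑ k ∈ Finset.range n, |g k ω| :=
            Finset.abs_sum_le_sum_abs _ _
      _ ≤ ∑ k ∈ Finset.range n, (n:ℝ) := Finset.sum_le_sum fun k hk =>
            (hgb k ω).trans (by exact_mod_cast (Finset.mem_range.1 hk).le)
      _ = (n:ℝ) * n := by
            rw [Finset.sum_const, Finset.card_range, nsmul_eq_mul]
    show |((X n ω : ℝ))^2 - n - κ * ∑ k ∈ Finset.range n, g k ω| ≤ _
    calc |((X n ω : ℝ))^2 - n - κ * ∑ k ∈ Finset.range n, g k ω|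
        ≤ |((X n ω : ℝ))^2 - n| + |κ * ∑ k ∈ Finset.range n, g k ω| := abs_sub _ _
    _ ≤ (|((X n ω : ℝ))^2| + |(n:ℝ)|) + |κ| * |∑ k ∈ Finset.range n, g k ω| := by
        rw [abs_mul]; exact add_le_add (abs_sub _ _) le_rfl
    _ ≤ ((n:ℝ)^2 + n) + |κ| * ((n:ℝ) * n) := by
        refine add_le_add (add_le_add h1 (by simp)) ?_
        exact mul_le_mul_of_nonneg_left h2 (abs_nonneg κ)
    _ = _ := by ring
  have hfint : ∀ n, Integrable (f n) μ := fun n =>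
    hInt (f n) _ (hfmeas n) (hfb n)
  -- the martingale property
  have hmart : Martingale f ℱ μ := by
    refine martingale_nat (fun n => (hfF n).stronglyMeasurable) hfint fun n => ?_
    set I : Ω → ℝ := Set.indicator {ω | X (n+1) ω = X n ω + 1} (fun _ => (1 : ℝ)) with hI
    set A : Ω → ℝ := fun ω => f n ω - 2*(X n ω:ℝ) - κ * g n ω with hA
    set B : Ω → ℝ := fun ω => 4*(X n ω:ℝ) with hB
    have hdecomp : f (n+1) = fun ω => A ω + B ω * I ω := by
      funext ω
      have hSum : ∑ k ∈ Finset.range (n+1), g k ω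
          = (∑ k ∈ Finset.range n, g k ω) + g n ω := Finset.sum_range_succ _ _
      rcases hstep n ω with h | h
      · have hIω : I ω = 1 := by
          rw [hI, Set.indicator_of_mem]; exact h
        have hx : ((X (n+1) ω : ℝ)) = (X n ω : ℝ) + 1 := by rw [h]; push_cast; ring
        simp only [hf, hA, hB, hIω, hx, hSum]
        push_cast
        ring
      · have hne : X (n+1) ω ≠ X n ω + 1 := by rw [h]; omega
        have hIω : I ω = 0 := by
          rw [hI, Set.indicator_of_notMem]; exact hne
        have hx : ((X (n+1) ω : ℝ)) = (X n ω : ℝ) - 1 := by rw [h]; push_cast; ring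
        simp only [hf, hA, hB, hIω, hx, hSum]
        push_cast
        ring
    have hAmeasF : Measurable[ℱ n] A := by
      refine ((hfF n).sub ?_).sub ((hgF n n le_rfl).const_mul κ)
      exact ((measurable_of_countable fun x : ℤ => 2*(x:ℝ)).comp (hXF n n le_rfl))
    have hAmeas : Measurable A := hAmeasF.mono (ℱ.le n) le_rfl
    have hAb : ∀ ω, |A ω| ≤ ((n:ℝ)^2 + n + |κ| * (n * n)) + 2*n + |κ| * n := by
      intro ω
      rw [hA]
      calc |f n ω - 2*(X n ω:ℝ) - κ * g n ω|
          ≤ |f n ω - 2*(X n ω:ℝ)| + |κ * g n ω| := abs_sub _ _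
      _ ≤ (|f n ω| + |2*(X n ω:ℝ)|) + |κ| * |g n ω| := by
          rw [abs_mul]; exact add_le_add (abs_sub _ _) le_rfl
      _ ≤ _ := by
          refine add_le_add (add_le_add (hfb n ω) ?_) ?_
          · rw [abs_mul]
            calc |(2:ℝ)| * |(X n ω:ℝ)| ≤ 2 * n := by
                  rw [abs_two]
                  exact mul_le_mul_of_nonneg_left (hXbR n ω) (by norm_num)
            _ = 2*(n:ℝ) := rfl
          · exact mul_le_mul_of_nonneg_left (hgb n ω) (abs_nonneg κ)
    have hAint : Integrable A μ := hInt A _ hAmeas hAb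
    have hBmeasF : Measurable[ℱ n] B :=
      (measurable_of_countable fun x : ℤ => 4*(x:ℝ)).comp (hXF n n le_rfl)
    have hsmeas : MeasurableSet {ω | X (n+1) ω = X n ω + 1} :=
      measurableSet_eq_fun (hmeas (n+1))
        ((measurable_of_countable fun x : ℤ => x + 1).comp (hmeas n))
    have hIint : Integrable I μ := by
      rw [hI]
      exact (integrable_const (1:ℝ)).indicator hsmeas
    have hIb : ∀ ω, |I ω| ≤ 1 := by
      intro ω
      rw [hI]
      by_cases h : ω ∈ {ω | X (n+1) ω = X n ω + 1} <;>
        simp [Set.indicator_of_mem, Set.indicator_of_notMem, h]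
    have hBb : ∀ ω, |B ω| ≤ 4*(n:ℝ) := by
      intro ω
      show |4*(X n ω:ℝ)| ≤ 4*(n:ℝ)
      rw [abs_mul, (by norm_num : |(4:ℝ)| = 4)]
      exact mul_le_mul_of_nonneg_left (hXbR n ω) (by norm_num)
    have hBIint : Integrable (fun ω => B ω * I ω) μ := by
      refine hInt _ (4*(n:ℝ)) ((hBmeasF.mono (ℱ.le n) le_rfl).mul
        ((measurable_const (a := (1:ℝ))).indicator hsmeas)) fun ω => ?_
      rw [abs_mul]
      calc |B ω| * |I ω| ≤ (4*(n:ℝ)) * 1 :=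
            mul_le_mul (hBb ω) (hIb ω) (abs_nonneg _) (by positivity)
      _ = 4*(n:ℝ) := mul_one _
    have hsum : f (n+1) = A + (fun ω => B ω * I ω) := by
      rw [hdecomp]; rfl
    have step1 : μ[f (n+1)|ℱ n] =ᵐ[μ] μ[A|ℱ n] + μ[fun ω => B ω * I ω|ℱ n] := by
      rw [hsum]
      exact condExp_add hAint hBIint _
    have step3 : μ[fun ω => B ω * I ω|ℱ n] =ᵐ[μ] fun ω => B ω * (μ[I|ℱ n]) ω := by
      have := condExp_mul_of_stronglyMeasurable_left hBmeasF.stronglyMeasurable hBIint hIint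
      filter_upwards [this] with ω hω
      exact hω
    -- final pointwise identity
    refine Filter.EventuallyEq.symm ?_
    have step2' : μ[A|ℱ n] = A :=
      condExp_of_stronglyMeasurable (ℱ.le n) hAmeasF.stronglyMeasurable hAint
    filter_upwards [step1, step3, hcond n] with ω h1 h3 h4
    have h4' : (μ[I|ℱ n]) ω = (if X n ω = M n ω ∧ X n ω = m n ω then 1/2
          else if X n ω = M n ω then 1/(1+c)
          else if X n ω = m n ω then c/(1+c)
          else 1/2 : ℝ) := h4
    rw [h1, Pi.add_apply, step2', h3, h4']
    set p : ℝ := if X n ω = M n ω ∧ X n ω = m n ω then 1/2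
          else if X n ω = M n ω then 1/(1+c)
          else if X n ω = m n ω then c/(1+c)
          else 1/2 with hp
    have key : -(2*(X n ω:ℝ)) - κ * g n ω + 4*(X n ω:ℝ) * p = 0 := by
      by_cases hMM : X n ω = M n ω
      · by_cases hmm : X n ω = m n ω
        · have hx0 : X n ω = 0 :=
            le_antisymm (hmm ▸ hm0 n ω) (hMM ▸ hM0 n ω)
          have hp2 : p = 1/2 := by rw [hp, if_pos ⟨hMM, hmm⟩]
          have hgz : g n ω = 0 := by
            show |(X n ω : ℝ)| * _ = 0
            simp [hx0]
          rw [hp2, hgz, hx0]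
          norm_num
        · have hp2 : p = 1/(1+c) := by
            rw [hp, if_neg (fun h => hmm h.2), if_pos hMM]
          have hxpos : (0:ℝ) ≤ (X n ω:ℝ) := by
            exact_mod_cast hMM ▸ hM0 n ω
          have hgz : g n ω = (X n ω : ℝ) := by
            show |(X n ω : ℝ)| *
              (if X n ω = m n ω ∨ X n ω = M n ω then (1:ℝ) else 0) = _
            rw [if_pos (Or.inr hMM), abs_of_nonneg hxpos, mul_one]
          rw [hp2, hgz, hκ]
          field_simp
          ring
      · by_cases hmm : X n ω = m n ω
        · have hp2 : p = c/(1+c) := by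
            rw [hp, if_neg (fun h => hMM h.1), if_neg hMM, if_pos hmm]
          have hxneg : (X n ω:ℝ) ≤ 0 := by
            exact_mod_cast hmm ▸ hm0 n ω
          have hgz : g n ω = -(X n ω : ℝ) := by
            show |(X n ω : ℝ)| *
              (if X n ω = m n ω ∨ X n ω = M n ω then (1:ℝ) else 0) = _
            rw [if_pos (Or.inl hmm), abs_of_nonpos hxneg, mul_one]
          rw [hp2, hgz, hκ]
          field_simp
          ring
        · have hp2 : p = 1/2 := by
            rw [hp, if_neg (fun h => hMM h.1), if_neg hMM, if_neg hmm]
          have hgz : g n ω = 0 := by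
            show |(X n ω : ℝ)| *
              (if X n ω = m n ω ∨ X n ω = M n ω then (1:ℝ) else 0) = 0
            rw [if_neg (fun h => h.elim hmm hMM), mul_zero]
          rw [hp2, hgz]
          ring
    show f n ω - 2*(X n ω:ℝ) - κ * g n ω + 4*(X n ω:ℝ) * p = f n ω
    linarith [key]
  refine ⟨hmart, fun n => ?_⟩
  have h0 : ∫ ω, f 0 ω ∂μ = 0 := by
    have : f 0 = fun _ => 0 := by
      funext ω; rw [hf]; simp [hX0 ω]
    rw [this]; simp
  calc ∫ ω, f n ω ∂μ = ∫ ω, (μ[f n|ℱ 0]) ω ∂μ :=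
        (integral_condExp (ℱ.le 0)).symm
  _ = ∫ ω, f 0 ω ∂μ := integral_congr_ae (hmart.condExp_ae_eq (Nat.zero_le n))
  _ = 0 := h0
end
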